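/- arXiv:2305.01721 — 2 statements merged into one kernel-verified Lean document; each statement's English description precedes it below -/
import Mathlib

section
/- Let n, d be positive integers with d ≥ 2. Then there exists a reduced decision rule system S such that n(S) = 2n + d, k(S) = 1, d(S) = d, |S| = n + 1, and L_ESR(S) ≥ 2^n. -/
/- Common formal framework for decision rule systems and decision trees /
   acyclic decision graphs, following Durdymyradov & Moshkov. -/

attribute [local instance] Classical.propDecidable

noncomputable section

namespace DRS

/-- A decision rule `(a_{i₁}=δ₁) ∧ ⋯ ∧ (a_{i_m}=δ_m) → σ`:
`K` is the finite set of equations (attribute index, value), `rhs` is σ. -/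
structure Rule where
  K : Finset (ℕ × ℕ)
  rhs : ℕ

/-- Well-formedness of a rule: the attributes on its left-hand side are pairwise different. -/
def Rule.WF (r : Rule) : Prop := ∀ p ∈ r.K, ∀ q ∈ r.K, p.1 = q.1 → p = q

/-- A(r): the set of attributes of a rule. -/
def Rule.attrs (r : Rule) : Finset ℕ := r.K.image Prod.fst

/-- The length m of a rule. -/
def Rule.len (r : Rule) : ℕ := r.K.card

/-- A(S) -/
def attrs (S : Finset Rule) : Finset ℕ := S.biUnion Rule.attrs

/-- n(S) -/
def nPar (S : Finset Rule) : ℕ := (attrs S).card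

/-- d(S): the maximum length of a rule of S. -/
def dPar (S : Finset Rule) : ℕ := S.sup Rule.len

/-- D(S): the set of right-hand sides. -/
def rhsSet (S : Finset Rule) : Finset ℕ := S.image Rule.rhs

/-- V_S(a_i) -/
def VS (S : Finset Rule) (i : ℕ) : Finset ℕ :=
  ((S.biUnion Rule.K).filter fun p => p.1 = i).image Prod.snd

/-- k(S) -/
def kPar (S : Finset Rule) : ℕ := (attrs S).sup fun i => (VS S i).card

/-- Attribute values in trees are `Option ℕ`; `none` plays the role of the special value `*`.
`allowed S false i` is (the lift of) `V_S(a_i)`, and `allowed S true i` is `EV_S(a_i)`. -/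
def allowed (S : Finset Rule) (ext : Bool) (i : ℕ) : Finset (Option ℕ) :=
  (VS S i).image some ∪ (if ext then {none} else ∅)

/-- Consistency of an equation system over ω ∪ {*}. -/
def ConsistentE (E : Finset (ℕ × Option ℕ)) : Prop :=
  ∀ p ∈ E, ∀ q ∈ E, p.1 = q.1 → p.2 = q.2

/-- Lift the left-hand side of a rule to an equation system over ω ∪ {*}. -/
def liftK (K : Finset (ℕ × ℕ)) : Finset (ℕ × Option ℕ) :=
  K.image fun p => (p.1, some p.2)

/-- A finite directed labeled graph: the nodes are `0, …, n-1`, with a distinguished root,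
each node carries either an attribute (working node) or a set of rules (terminal node),
and edges are labeled with elements of ω ∪ {*}. -/
structure DGraph where
  n : ℕ
  root : ℕ
  label : ℕ → ℕ ⊕ Finset Rule
  edges : Finset (ℕ × Option ℕ × ℕ)

namespace DGraph

def step (G : DGraph) (u v : ℕ) : Prop := ∃ l, (u, l, v) ∈ G.edges

/-- The graph has no directed cycles. -/
def Acyclic (G : DGraph) : Prop := ∀ v, ¬ Relation.TransGen G.step v v

/-- A node is terminal if no edge leaves it. -/
def IsTerminal (G : DGraph) (v : ℕ) : Prop := ∀ e ∈ G.edges, e.1 ≠ v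

/-- The set of rules attached to a (terminal) node. -/
def termSet (G : DGraph) (v : ℕ) : Finset Rule :=
  Sum.elim (fun _ => (∅ : Finset Rule)) id (G.label v)

/-- `G` is an acyclic decision graph over the rule system `S`;
`ext = false` : branching over `V_S` (o-type), `ext = true` : branching over `EV_S` (e-type).
Terminal nodes are labeled with subsets of S; each working node is labeled with an
attribute `a` of `A(S)` and has exactly one leaving edge for every element of
`V_S(a)` (resp. `EV_S(a)`), the edges leaving it being labeled with these
pairwise different elements. -/
def IsDG (G : DGraph) (S : Finset Rule) (ext : Bool) : Prop :=
  G.root < G.n ∧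
  (∀ e ∈ G.edges, e.1 < G.n ∧ e.2.2 < G.n) ∧
  G.Acyclic ∧
  (∀ v < G.n,
    if G.IsTerminal v then
      ∃ Z : Finset Rule, G.label v = Sum.inr Z ∧ Z ⊆ S
    else
      ∃ a : ℕ, G.label v = Sum.inl a ∧ a ∈ attrs S ∧
        (∀ l : Option ℕ, (∃ w, (v, l, w) ∈ G.edges) ↔ l ∈ allowed S ext a) ∧
        (∀ l w w', (v, l, w) ∈ G.edges → (v, l, w') ∈ G.edges → w = w'))

/-- `G` is a finite directed tree with root: the root has no entering edge and every
other node has exactly one entering edge (together with acyclicity this makes the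
graph a rooted tree). -/
def IsTree (G : DGraph) : Prop :=
  (∀ e ∈ G.edges, e.2.2 ≠ G.root) ∧
  (∀ v < G.n, v ≠ G.root → ∃! e, e ∈ G.edges ∧ e.2.2 = v)

/-- `chainFrom G v p t`: the list `p` of (node, leaving-edge-label) pairs forms a
directed path in `G` starting at `v` and ending at `t`. -/
def chainFrom (G : DGraph) : ℕ → List (ℕ × Option ℕ) → ℕ → Prop
  | v, [], t => v = t
  | v, e :: rest, t => e.1 = v ∧ ∃ w, (v, e.2, w) ∈ G.edges ∧ chainFrom G w rest t

/-- A complete path: from the root to a terminal node; it is recorded by the list of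
its working nodes with the labels of the edges taken, together with its terminal node. -/
def IsCompletePath (G : DGraph) (p : List (ℕ × Option ℕ)) (t : ℕ) : Prop :=
  G.chainFrom G.root p t ∧ G.IsTerminal t ∧ t < G.n

/-- K(ξ): the equation system associated with a complete path. -/
def pathEqs (G : DGraph) (p : List (ℕ × Option ℕ)) : Finset (ℕ × Option ℕ) :=
  (p.filterMap fun e =>
    Sum.elim (fun a => some (a, e.2)) (fun _ => none) (G.label e.1)).toFinset

/-- L(Γ): the number of nodes. -/
def size (G : DGraph) : ℕ := G.n

/-- T(Γ): the number of terminal nodes labeled with pairwise different sets of rules. -/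
def tCount (G : DGraph) : ℕ :=
  (((Finset.range G.n).filter fun v => G.IsTerminal v).image fun v => G.termSet v).card

/-- h(Γ): the maximum number of working nodes on a complete path. -/
def depth (G : DGraph) : ℕ :=
  sSup {m | ∃ p t, G.IsCompletePath p t ∧ p.length = m}

/-- Path conditions for (the solutions of) the problems All Rules / EAll Rules. -/
def SolvesAR (G : DGraph) (S : Finset Rule) : Prop :=
  ∀ p t, G.IsCompletePath p t → ConsistentE (G.pathEqs p) →
    (∀ r ∈ G.termSet t, liftK r.K ⊆ G.pathEqs p) ∧
    (∀ r ∈ S, r ∉ G.termSet t → ¬ ConsistentE (liftK r.K ∪ G.pathEqs p))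

/-- Path conditions for the problems All Decisions / EAll Decisions. -/
def SolvesAD (G : DGraph) (S : Finset Rule) : Prop :=
  ∀ p t, G.IsCompletePath p t → ConsistentE (G.pathEqs p) →
    (∀ r ∈ G.termSet t, liftK r.K ⊆ G.pathEqs p) ∧
    (∀ r ∈ S, r ∉ G.termSet t → r.rhs ∉ (G.termSet t).image Rule.rhs →
      ¬ ConsistentE (liftK r.K ∪ G.pathEqs p))

/-- Path conditions for the problems Some Rules / ESome Rules. -/
def SolvesSR (G : DGraph) (S : Finset Rule) : Prop :=
  ∀ p t, G.IsCompletePath p t → ConsistentE (G.pathEqs p) →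
    (∀ r ∈ G.termSet t, liftK r.K ⊆ G.pathEqs p) ∧
    (G.termSet t = ∅ → ∀ r ∈ S, ¬ ConsistentE (liftK r.K ∪ G.pathEqs p))

end DGraph

/-- Γ is a decision tree over S solving AR(S) (an o-tree). -/
def TreeSolvesAR (S : Finset Rule) (G : DGraph) : Prop :=
  G.IsDG S false ∧ G.IsTree ∧ G.SolvesAR S
/-- Γ is a decision tree over S solving EAR(S) (an e-tree). -/
def TreeSolvesEAR (S : Finset Rule) (G : DGraph) : Prop :=
  G.IsDG S true ∧ G.IsTree ∧ G.SolvesAR S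
/-- Γ is a decision tree over S solving AD(S) (an o-tree). -/
def TreeSolvesAD (S : Finset Rule) (G : DGraph) : Prop :=
  G.IsDG S false ∧ G.IsTree ∧ G.SolvesAD S
/-- Γ is a decision tree over S solving EAD(S) (an e-tree). -/
def TreeSolvesEAD (S : Finset Rule) (G : DGraph) : Prop :=
  G.IsDG S true ∧ G.IsTree ∧ G.SolvesAD S
/-- Γ is a decision tree over S solving SR(S) (an o-tree). -/
def TreeSolvesSR (S : Finset Rule) (G : DGraph) : Prop :=
  G.IsDG S false ∧ G.IsTree ∧ G.SolvesSR S
/-- Γ is a decision tree over S solving ESR(S) (an e-tree). -/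
def TreeSolvesESR (S : Finset Rule) (G : DGraph) : Prop :=
  G.IsDG S true ∧ G.IsTree ∧ G.SolvesSR S

/-- L_AR(S): minimum number of nodes of a decision tree over S solving AR(S). -/
def L_AR (S : Finset Rule) : ℕ := sInf {m | ∃ G : DGraph, TreeSolvesAR S G ∧ G.size = m}
def L_EAR (S : Finset Rule) : ℕ := sInf {m | ∃ G : DGraph, TreeSolvesEAR S G ∧ G.size = m}
def L_AD (S : Finset Rule) : ℕ := sInf {m | ∃ G : DGraph, TreeSolvesAD S G ∧ G.size = m}
def L_EAD (S : Finset Rule) : ℕ := sInf {m | ∃ G : DGraph, TreeSolvesEAD S G ∧ G.size = m}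
def L_SR (S : Finset Rule) : ℕ := sInf {m | ∃ G : DGraph, TreeSolvesSR S G ∧ G.size = m}
def L_ESR (S : Finset Rule) : ℕ := sInf {m | ∃ G : DGraph, TreeSolvesESR S G ∧ G.size = m}

/-- T_AR(S): minimum number of differently-labeled terminal nodes of a decision tree
over S solving AR(S); similarly for the other problems. -/
def T_AR (S : Finset Rule) : ℕ := sInf {m | ∃ G : DGraph, TreeSolvesAR S G ∧ G.tCount = m}
def T_EAR (S : Finset Rule) : ℕ := sInf {m | ∃ G : DGraph, TreeSolvesEAR S G ∧ G.tCount = m}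
def T_AD (S : Finset Rule) : ℕ := sInf {m | ∃ G : DGraph, TreeSolvesAD S G ∧ G.tCount = m}
def T_EAD (S : Finset Rule) : ℕ := sInf {m | ∃ G : DGraph, TreeSolvesEAD S G ∧ G.tCount = m}
def T_SR (S : Finset Rule) : ℕ := sInf {m | ∃ G : DGraph, TreeSolvesSR S G ∧ G.tCount = m}
def T_ESR (S : Finset Rule) : ℕ := sInf {m | ∃ G : DGraph, TreeSolvesESR S G ∧ G.tCount = m}

/-- h_AR(S): minimum depth of a decision tree over S solving AR(S); similarly for the others. -/
def h_AR (S : Finset Rule) : ℕ := sInf {m | ∃ G : DGraph, TreeSolvesAR S G ∧ G.depth = m}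
def h_EAR (S : Finset Rule) : ℕ := sInf {m | ∃ G : DGraph, TreeSolvesEAR S G ∧ G.depth = m}
def h_AD (S : Finset Rule) : ℕ := sInf {m | ∃ G : DGraph, TreeSolvesAD S G ∧ G.depth = m}
def h_EAD (S : Finset Rule) : ℕ := sInf {m | ∃ G : DGraph, TreeSolvesEAD S G ∧ G.depth = m}
def h_SR (S : Finset Rule) : ℕ := sInf {m | ∃ G : DGraph, TreeSolvesSR S G ∧ G.depth = m}
def h_ESR (S : Finset Rule) : ℕ := sInf {m | ∃ G : DGraph, TreeSolvesESR S G ∧ G.depth = m}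

/-- L^DG_SR(S): minimum number of nodes of an acyclic decision graph solving SR(S). -/
def LDG_SR (S : Finset Rule) : ℕ :=
  sInf {m | ∃ G : DGraph, G.IsDG S false ∧ G.SolvesSR S ∧ G.size = m}
/-- L^DG_ESR(S): minimum number of nodes of an acyclic decision graph solving ESR(S). -/
def LDG_ESR (S : Finset Rule) : ℕ :=
  sInf {m | ∃ G : DGraph, G.IsDG S true ∧ G.SolvesSR S ∧ G.size = m}

/-- A node cover of the hypergraph G(S). -/
def IsNodeCover (S : Finset Rule) (B : Finset ℕ) : Prop :=
  B ⊆ attrs S ∧ ∀ r ∈ S, (Rule.attrs r).Nonempty → (Rule.attrs r ∩ B).Nonempty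

/-- β(S): the minimum cardinality of a node cover of the hypergraph G(S). -/
def beta (S : Finset Rule) : ℕ := sInf {c | ∃ B, IsNodeCover S B ∧ B.card = c}

/-- S⁺: the subsystem of S consisting of all rules of length d(S). -/
def Splus (S : Finset Rule) : Finset Rule := S.filter fun r => r.len = dPar S

/-- β⁺(S) = β(S⁺). -/
def betaPlus (S : Finset Rule) : ℕ := beta (Splus S)

/-- The rule r_α : delete from the left-hand side of r all equations belonging to α. -/
def Rule.restrict (r : Rule) (α : Finset (ℕ × Option ℕ)) : Rule :=
  ⟨r.K.filter fun p => (p.1, some p.2) ∉ α, r.rhs⟩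

/-- S_α : the system of the rules r_α for all r ∈ S with K(r) ∪ α consistent. -/
def restrict (S : Finset Rule) (α : Finset (ℕ × Option ℕ)) : Finset Rule :=
  (S.filter fun r => ConsistentE (liftK r.K ∪ α)).image fun r => r.restrict α

/-- E_C(S): consistent equation systems whose attributes are in A(S) and whose
values belong to V_S (ext = false) resp. EV_S (ext = true). -/
def ESys (S : Finset Rule) (ext : Bool) : Set (Finset (ℕ × Option ℕ)) :=
  {α | ConsistentE α ∧ ∀ p ∈ α, p.1 ∈ attrs S ∧ p.2 ∈ allowed S ext p.1}

/-- I_SR(S). -/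
def I_SR (S : Finset Rule) : Finset Rule :=
  if ∃ r ∈ S, r.len = 0 then S.filter fun r => r.len = 0 else S

/-- D₀(S): the right-hand sides of the rules of S of length 0. -/
def D0 (S : Finset Rule) : Finset ℕ := (S.filter fun r => r.len = 0).image Rule.rhs

/-- I_AD(S). -/
def I_AD (S : Finset Rule) : Finset Rule :=
  S.filter fun r => r.len = 0 ∨ r.rhs ∉ D0 S

def betaC (S : Finset Rule) (ext : Bool) : ℕ :=
  sSup {b | ∃ α ∈ ESys S ext, beta (restrict S α) = b}
def betaCplus (S : Finset Rule) (ext : Bool) : ℕ :=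
  sSup {b | ∃ α ∈ ESys S ext, betaPlus (restrict S α) = b}
def betaI (S : Finset Rule) (I : Finset Rule → Finset Rule) : ℕ :=
  sSup {b | ∃ α ∈ ESys S true, beta (I (restrict S α)) = b}
def betaIplus (S : Finset Rule) (I : Finset Rule → Finset Rule) : ℕ :=
  sSup {b | ∃ α ∈ ESys S true, betaPlus (I (restrict S α)) = b}

def beta_AR (S : Finset Rule) : ℕ := betaC S false
def beta_AD (S : Finset Rule) : ℕ := betaC S false
def beta_SR (S : Finset Rule) : ℕ := betaC S false
def beta_EAR (S : Finset Rule) : ℕ := betaC S true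
def beta_ARplus (S : Finset Rule) : ℕ := betaCplus S false
def beta_ADplus (S : Finset Rule) : ℕ := betaCplus S false
def beta_SRplus (S : Finset Rule) : ℕ := betaCplus S false
def beta_EARplus (S : Finset Rule) : ℕ := betaCplus S true
def beta_EAD (S : Finset Rule) : ℕ := betaI S I_AD
def beta_EADplus (S : Finset Rule) : ℕ := betaIplus S I_AD
def beta_ESR (S : Finset Rule) : ℕ := betaI S I_SR
def beta_ESRplus (S : Finset Rule) : ℕ := betaIplus S I_SR

/-- R_SR(S). -/
def R_SR (S : Finset Rule) : Finset Rule :=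
  S.filter fun r => ¬ ∃ r' ∈ S, r'.K ⊂ r.K

/-- R_AD(S). -/
def R_AD (S : Finset Rule) : Finset Rule :=
  S.filter fun r => ¬ ∃ r' ∈ S, r'.K ⊂ r.K ∧ r'.rhs = r.rhs

/-- A reduced decision rule system. -/
def Reduced (S : Finset Rule) : Prop :=
  attrs S ⊆ Finset.range (nPar S + 1) ∧
  rhsSet S ⊆ Finset.range ((rhsSet S).card + 1) ∧
  (∀ i ∈ attrs S, VS S i ⊆ Finset.range (kPar S + 1)) ∧
  1 ≤ dPar S

/-- Length of the binary representation of a natural number. -/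
def bitLen (m : ℕ) : ℕ := max 1 (Nat.size m)

/-- The length of the word "(a⟨i⟩=⟨δ⟩)" encoding one equation. -/
def eqLen (p : ℕ × ℕ) : ℕ := 4 + bitLen p.1 + bitLen p.2

/-- The length of the word encoding one rule (with the "∧" signs and "→"). -/
def Rule.wordLen (r : Rule) : ℕ :=
  (∑ p ∈ r.K, eqLen p) + (r.K.card - 1) + 1 + bitLen r.rhs

/-- size(S): the length of the word representing S (with ";" separating the rules). -/
def sizeS (S : Finset Rule) : ℕ := (∑ r ∈ S, r.wordLen) + (S.card - 1)
/-! ### Auxiliary lemmas -/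

section Aux

lemma pathEqs_nil (G : DGraph) : G.pathEqs [] = ∅ := rfl

lemma pathEqs_cons_inl (G : DGraph) {u : ℕ} {a : ℕ} (h : G.label u = Sum.inl a)
    (l : Option ℕ) (rest : List (ℕ × Option ℕ)) :
    G.pathEqs ((u, l) :: rest) = insert (a, l) (G.pathEqs rest) := by
  simp [DGraph.pathEqs, List.filterMap_cons, h]

lemma chain_append (G : DGraph) (p : List (ℕ × Option ℕ)) (v u : ℕ) (l : Option ℕ) (t : ℕ) :
    G.chainFrom v (p ++ [(u, l)]) t ↔ G.chainFrom v p u ∧ (u, l, t) ∈ G.edges := by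
  induction p generalizing v with
  | nil =>
      constructor
      · rintro ⟨rfl, w, hw, rfl⟩; exact ⟨rfl, hw⟩
      · rintro ⟨rfl, hw⟩; exact ⟨rfl, t, hw, rfl⟩
  | cons e rest ih =>
      constructor
      · rintro ⟨rfl, w, hw, hc⟩
        obtain ⟨h1, h2⟩ := (ih w).1 hc
        exact ⟨⟨rfl, w, hw, h1⟩, h2⟩
      · rintro ⟨⟨rfl, w, hw, hc⟩, h2⟩
        exact ⟨rfl, w, hw, (ih w).2 ⟨hc, h2⟩⟩

lemma path_unique (G : DGraph) (hb : ∀ e ∈ G.edges, e.1 < G.n ∧ e.2.2 < G.n)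
    (ht : G.IsTree) :
    ∀ k (p q : List (ℕ × Option ℕ)) t, p.length ≤ k →
      G.chainFrom G.root p t → G.chainFrom G.root q t → p = q := by
  intro k
  induction k with
  | zero =>
      intro p q t hlen hp hq
      rcases List.eq_nil_or_concat p with rfl | ⟨L, b, rfl⟩
      · rcases List.eq_nil_or_concat q with rfl | ⟨L', b', rfl⟩
        · rfl
        · -- chainFrom root [] t : root = t; q ends with edge into t = root
          obtain ⟨_, hb'⟩ := (chain_append G L' G.root b'.1 b'.2 t).1 (by
            simpa using hq)
          exact absurd hp.symm (ht.1 _ hb')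
      · simp at hlen
  | succ k ih =>
      intro p q t hlen hp hq
      rcases List.eq_nil_or_concat p with rfl | ⟨L, b, rfl⟩
      · rcases List.eq_nil_or_concat q with rfl | ⟨L', b', rfl⟩
        · rfl
        · obtain ⟨_, hb'⟩ := (chain_append G L' G.root b'.1 b'.2 t).1 (by
            simpa using hq)
          exact absurd hp.symm (ht.1 _ hb')
      · rcases List.eq_nil_or_concat q with rfl | ⟨L', b', rfl⟩
        · obtain ⟨_, hb1⟩ := (chain_append G L G.root b.1 b.2 t).1 (by simpa using hp)
          exact absurd hq.symm (ht.1 _ hb1)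
        · obtain ⟨hc1, hb1⟩ := (chain_append G L G.root b.1 b.2 t).1 (by simpa using hp)
          obtain ⟨hc2, hb2⟩ := (chain_append G L' G.root b'.1 b'.2 t).1 (by simpa using hq)
          have htn : t < G.n := (hb _ hb1).2
          have htr : t ≠ G.root := by
            intro h; exact ht.1 _ hb1 (by simp [h])
          obtain ⟨e, _, heu⟩ := ht.2 t htn htr
          have h1 : (b.1, b.2, t) = e := heu _ ⟨hb1, rfl⟩
          have h2 : (b'.1, b'.2, t) = e := heu _ ⟨hb2, rfl⟩
          have hbb : b = b' := by
            have := h1.trans h2.symm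
            cases b; cases b'
            simpa using congrArg (fun x : ℕ × Option ℕ × ℕ => (x.1, x.2.1)) this
          have hL : L = L' := by
            apply ih L L' b.1 (by simp at hlen; omega) hc1
            rw [hbb] at hc1 ⊢
            have : b'.1 = b.1 := by rw [hbb]
            exact this ▸ hc2
          rw [hL, hbb]

/-- In an e-DG, following a value assignment `σ` yields a complete path whose
equation system is contained in the graph of `σ`. -/
lemma exists_path (G : DGraph) (S : Finset Rule) (hdg : G.IsDG S true)
    (σ : ℕ → Option ℕ) (hσ : ∀ a ∈ attrs S, σ a ∈ allowed S true a) :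
    ∀ m v, ((Finset.range G.n).filter
        (fun w => Relation.TransGen G.step v w)).card ≤ m → v < G.n →
      ∃ p t, G.chainFrom v p t ∧ G.IsTerminal t ∧ t < G.n ∧
        ∀ q ∈ G.pathEqs p, q.1 ∈ attrs S ∧ q.2 = σ q.1 := by
  obtain ⟨hroot, hedge, hacyc, hnodes⟩ := hdg
  intro m
  induction m with
  | zero =>
      intro v hm hv
      by_cases hterm : G.IsTerminal v
      · exact ⟨[], v, rfl, hterm, hv, by simp [pathEqs_nil]⟩
      · exfalso
        have := hnodes v hv
        rw [if_neg hterm] at this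
        obtain ⟨a, hl, ha, hall, _⟩ := this
        obtain ⟨w, hw⟩ := (hall (σ a)).2 (hσ a ha)
        have hwn : w < G.n := (hedge _ hw).2
        have : w ∈ (Finset.range G.n).filter (fun x => Relation.TransGen G.step v x) := by
          simp only [Finset.mem_filter, Finset.mem_range]
          exact ⟨hwn, Relation.TransGen.single ⟨σ a, hw⟩⟩
        have := Finset.card_pos.2 ⟨w, this⟩
        omega
  | succ m ih =>
      intro v hm hv
      by_cases hterm : G.IsTerminal v
      · exact ⟨[], v, rfl, hterm, hv, by simp [pathEqs_nil]⟩
      · have hnode := hnodes v hv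
        rw [if_neg hterm] at hnode
        obtain ⟨a, hl, ha, hall, _⟩ := hnode
        obtain ⟨w, hw⟩ := (hall (σ a)).2 (hσ a ha)
        have hwn : w < G.n := (hedge _ hw).2
        have hsub : (Finset.range G.n).filter (fun x => Relation.TransGen G.step w x) ⊂
            (Finset.range G.n).filter (fun x => Relation.TransGen G.step v x) := by
          constructor
          · intro x hx
            simp only [Finset.mem_filter, Finset.mem_range] at hx ⊢
            exact ⟨hx.1, (Relation.TransGen.single (⟨σ a, hw⟩ : G.step v w)).trans hx.2⟩
          · intro hsub'
            have hwv : w ∈ (Finset.range G.n).filter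
                (fun x => Relation.TransGen G.step v x) := by
              simp only [Finset.mem_filter, Finset.mem_range]
              exact ⟨hwn, Relation.TransGen.single ⟨σ a, hw⟩⟩
            have := hsub' hwv
            simp only [Finset.mem_filter] at this
            exact hacyc w this.2
        have hcard := Finset.card_lt_card hsub
        obtain ⟨p, t, hc, hterm', htn, hq⟩ := ih w (by omega) hwn
        refine ⟨(v, σ a) :: p, t, ⟨rfl, w, hw, hc⟩, hterm', htn, ?_⟩
        intro q hqmem
        rw [pathEqs_cons_inl G hl] at hqmem
        rcases Finset.mem_insert.1 hqmem with rfl | hqmem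
        · exact ⟨ha, rfl⟩
        · exact hq q hqmem

end Aux
section FullTree

/-- Equation system encoded by the binary digits of `u` (below its leading bit). -/
def Eqs (u : ℕ) : Finset (ℕ × Option ℕ) :=
  (Finset.range (Nat.log 2 u)).image fun i =>
    (i, if u / 2 ^ (Nat.log 2 u - 1 - i) % 2 = 1 then (none : Option ℕ) else some 0)

lemma log_step (u c : ℕ) (hu : 1 ≤ u) (hc : c < 2) :
    Nat.log 2 (2 * u + c) = Nat.log 2 u + 1 := by
  have h1 : 2 ^ Nat.log 2 u ≤ u := Nat.pow_log_le_self 2 (by omega)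
  have h2 : u < 2 ^ (Nat.log 2 u + 1) := Nat.lt_pow_succ_log_self (by norm_num) u
  apply Nat.log_eq_of_pow_le_of_lt_pow
  · rw [pow_succ]; omega
  · rw [pow_succ (n := Nat.log 2 u + 1)]; omega

lemma eqs_step (u c : ℕ) (hu : 1 ≤ u) (hc : c < 2) :
    Eqs (2 * u + c) =
      insert (Nat.log 2 u, if c = 1 then (none : Option ℕ) else some 0) (Eqs u) := by
  have hL := log_step u c hu hc
  set L := Nat.log 2 u with hLdef
  unfold Eqs
  rw [hL, Finset.range_add_one, Finset.image_insert]
  have h0 : L + 1 - 1 - L = 0 := by omega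
  have hmc : (2 * u + c) % 2 = c := by omega
  congr 1
  · simp only [h0, pow_zero, Nat.div_one, hmc]
  · apply Finset.image_congr
    intro i hi
    simp only [Finset.mem_coe, Finset.mem_range] at hi
    have he : L + 1 - 1 - i = (L - 1 - i) + 1 := by omega
    have hdiv : (2 * u + c) / 2 = u := by omega
    simp only [he, pow_succ, mul_comm (2 ^ (L - 1 - i)) 2, ← Nat.div_div_eq_div_mul, hdiv]
    rfl

lemma eqs_one : Eqs 1 = ∅ := by
  simp [Eqs, Nat.log_one_right]

lemma mem_eqs (u i : ℕ) (hi : i < Nat.log 2 u) :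
    (i, if u / 2 ^ (Nat.log 2 u - 1 - i) % 2 = 1 then (none : Option ℕ) else some 0)
      ∈ Eqs u := by
  exact Finset.mem_image.2 ⟨i, Finset.mem_range.2 hi, rfl⟩

/-- The full binary e-tree over a system whose attributes are `0,…,N-1`
with `V_S(i) = {0}` for each of them. -/
def fullTree (S : Finset Rule) (N : ℕ) : DGraph where
  n := 2 ^ (N + 1) - 1
  root := 0
  label v := if v < 2 ^ N - 1 then Sum.inl (Nat.log 2 (v + 1))
             else Sum.inr (S.filter fun r => liftK r.K ⊆ Eqs (v + 1))
  edges := (Finset.range (2 ^ N - 1)).biUnion fun v =>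
    {(v, some 0, 2 * v + 1), (v, none, 2 * v + 2)}

lemma mem_fullTree_edges (S : Finset Rule) (N : ℕ) (e : ℕ × Option ℕ × ℕ) :
    e ∈ (fullTree S N).edges ↔ ∃ v < 2 ^ N - 1,
      e = (v, some 0, 2 * v + 1) ∨ e = (v, none, 2 * v + 2) := by
  simp only [fullTree, Finset.mem_biUnion, Finset.mem_range, Finset.mem_insert,
    Finset.mem_singleton]

lemma fullTree_terminal_iff (S : Finset Rule) (N : ℕ) (v : ℕ) :
    (fullTree S N).IsTerminal v ↔ ¬ v < 2 ^ N - 1 := by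
  constructor
  · intro h hv
    exact h (v, some 0, 2 * v + 1)
      ((mem_fullTree_edges S N _).2 ⟨v, hv, Or.inl rfl⟩) rfl
  · intro hv e he
    obtain ⟨w, hw, h⟩ := (mem_fullTree_edges S N e).1 he
    rcases h with rfl | rfl <;> (intro h; simp at h; omega)

lemma fullTree_chain_eqs (S : Finset Rule) (N : ℕ) :
    ∀ (p : List (ℕ × Option ℕ)) (v t : ℕ), (fullTree S N).chainFrom v p t →
      Eqs (t + 1) ⊆ Eqs (v + 1) ∪ (fullTree S N).pathEqs p := by
  intro p
  induction p with
  | nil =>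
      intro v t h
      cases h
      exact Finset.subset_union_left
  | cons e rest ih =>
      obtain ⟨v, l⟩ := e
      rintro v0 t ⟨rfl, w, hw, hc⟩
      obtain ⟨v', hv'lt, hcase⟩ := (mem_fullTree_edges S N _).1 hw
      have hdec : v < 2 ^ N - 1 ∧
          ((l = some 0 ∧ w = 2 * v + 1) ∨ (l = none ∧ w = 2 * v + 2)) := by
        rcases hcase with h | h <;>
          · simp only [Prod.mk.injEq] at h
            obtain ⟨rfl, h2, h3⟩ := h
            first
              | exact ⟨hv'lt, Or.inl ⟨h2, h3⟩⟩
              | exact ⟨hv'lt, Or.inr ⟨h2, h3⟩⟩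
      obtain ⟨hvlt, hcase2⟩ := hdec
      have hlab : (fullTree S N).label v = Sum.inl (Nat.log 2 (v + 1)) := by
        simp only [fullTree]
        rw [if_pos hvlt]
      have hEw : Eqs (w + 1) = insert (Nat.log 2 (v + 1), l) (Eqs (v + 1)) := by
        rcases hcase2 with ⟨rfl, rfl⟩ | ⟨rfl, rfl⟩
        · have h2 : 2 * v + 1 + 1 = 2 * (v + 1) + 0 := by ring
          rw [h2, eqs_step (v + 1) 0 (by omega) (by omega)]
          norm_num
        · have h2 : 2 * v + 2 + 1 = 2 * (v + 1) + 1 := by ring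
          rw [h2, eqs_step (v + 1) 1 (by omega) (by omega)]
          norm_num
      have hmain := ih w t hc
      have hcons : (fullTree S N).pathEqs ((v, l) :: rest) =
          insert (Nat.log 2 (v + 1), l) ((fullTree S N).pathEqs rest) :=
        pathEqs_cons_inl _ hlab l rest
      rw [hcons]
      intro x hx
      have hx2 := hmain hx
      rw [hEw] at hx2
      rcases Finset.mem_union.1 hx2 with h | h
      · rcases Finset.mem_insert.1 h with rfl | h
        · exact Finset.mem_union_right _ (Finset.mem_insert_self _ _)
        · exact Finset.mem_union_left _ h
      · exact Finset.mem_union_right _ (Finset.mem_insert_of_mem h)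

lemma fullTree_solves (S : Finset Rule) (N : ℕ) (hN : 1 ≤ N)
    (hattrs : attrs S = Finset.range N)
    (hVS : ∀ i ∈ Finset.range N, VS S i = {0}) :
    TreeSolvesESR S (fullTree S N) := by
  have hp1 : 2 ≤ 2 ^ N := by
    calc 2 = 2 ^ 1 := by norm_num
    _ ≤ 2 ^ N := Nat.pow_le_pow_right (by norm_num) hN
  have hp2 : 2 ^ (N + 1) = 2 * 2 ^ N := by rw [pow_succ]; ring
  have he1 : 2 ^ N - 1 + 1 = 2 ^ N := by omega
  have he2 : 2 ^ (N + 1) - 1 + 1 = 2 ^ (N + 1) := by omega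
  have hallow : ∀ i < N, allowed S true i = {some 0, none} := by
    intro i hi
    unfold allowed
    rw [hVS i (Finset.mem_range.2 hi)]
    ext l
    simp
  have hstep : ∀ a b, (fullTree S N).step a b → a < b := by
    rintro a b ⟨l, hl⟩
    obtain ⟨v, hv, h⟩ := (mem_fullTree_edges S N _).1 hl
    rcases h with h | h <;>
      · simp only [Prod.mk.injEq] at h
        obtain ⟨h1, h2, h3⟩ := h
        omega
  have htrans : ∀ a b, Relation.TransGen (fullTree S N).step a b → a < b := by
    intro a b h
    induction h with
    | single h => exact hstep _ _ h
    | tail _ h ih => exact lt_trans ih (hstep _ _ h)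
  refine ⟨⟨?_, ?_, ?_, ?_⟩, ⟨?_, ?_⟩, ?_⟩
  · -- root < n
    show 0 < 2 ^ (N + 1) - 1
    omega
  · -- edge bounds
    intro e he
    obtain ⟨v, hv, h⟩ := (mem_fullTree_edges S N e).1 he
    rcases h with rfl | rfl
    · exact ⟨show v < 2 ^ (N + 1) - 1 by omega, show 2 * v + 1 < 2 ^ (N + 1) - 1 by omega⟩
    · exact ⟨show v < 2 ^ (N + 1) - 1 by omega, show 2 * v + 2 < 2 ^ (N + 1) - 1 by omega⟩
  · -- acyclic
    intro v hv
    exact absurd (htrans v v hv) (lt_irrefl v)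
  · -- node conditions
    intro v hv
    by_cases hvt : v < 2 ^ N - 1
    · rw [if_neg (by rw [fullTree_terminal_iff]; omega)]
      have hlog : Nat.log 2 (v + 1) < N := Nat.log_lt_of_lt_pow (by omega) (by omega)
      refine ⟨Nat.log 2 (v + 1), ?_, ?_, ?_, ?_⟩
      · simp only [fullTree]; rw [if_pos hvt]
      · rw [hattrs]; exact Finset.mem_range.2 hlog
      · intro l
        rw [hallow _ hlog]
        constructor
        · rintro ⟨w, hw⟩
          obtain ⟨v', hv', h⟩ := (mem_fullTree_edges S N _).1 hw
          rcases h with h | h <;>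
            · simp only [Prod.mk.injEq] at h
              simp [h.2.1]
        · intro hl
          rcases Finset.mem_insert.1 hl with rfl | hl
          · exact ⟨2 * v + 1, (mem_fullTree_edges S N _).2 ⟨v, hvt, Or.inl rfl⟩⟩
          · rw [Finset.mem_singleton] at hl
            subst hl
            exact ⟨2 * v + 2, (mem_fullTree_edges S N _).2 ⟨v, hvt, Or.inr rfl⟩⟩
      · intro l w w' hw hw'
        obtain ⟨v1, hv1, h1⟩ := (mem_fullTree_edges S N _).1 hw
        obtain ⟨v2, hv2, h2⟩ := (mem_fullTree_edges S N _).1 hw'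
        rcases h1 with h1 | h1 <;> rcases h2 with h2 | h2 <;>
          · simp only [Prod.mk.injEq] at h1 h2
            obtain ⟨e1, e2, e3⟩ := h1
            obtain ⟨f1, f2, f3⟩ := h2
            first
              | omega
              | (rw [e2] at f2; simp at f2)
              | (rw [← e2] at f2; simp at f2)
    · rw [if_pos ((fullTree_terminal_iff S N v).2 hvt)]
      refine ⟨S.filter fun r => liftK r.K ⊆ Eqs (v + 1), ?_, Finset.filter_subset _ _⟩
      simp only [fullTree]
      rw [if_neg hvt]
  · -- no edge into root
    intro e he
    obtain ⟨v, hv, h⟩ := (mem_fullTree_edges S N e).1 he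
    rcases h with rfl | rfl
    · exact show 2 * v + 1 ≠ 0 by omega
    · exact show 2 * v + 2 ≠ 0 by omega
  · -- unique parent
    intro v hv hvr
    have hv0 : v ≠ 0 := hvr
    have hvn : v < 2 ^ (N + 1) - 1 := hv
    obtain ⟨w, hw⟩ : ∃ w, v = 2 * w + 1 ∨ v = 2 * w + 2 := ⟨(v - 1) / 2, by omega⟩
    have hwlt : w < 2 ^ N - 1 := by omega
    rcases hw with hw | hw
    · refine ⟨(w, some 0, 2 * w + 1),
        ⟨(mem_fullTree_edges S N _).2 ⟨w, hwlt, Or.inl rfl⟩, show 2 * w + 1 = v by omega⟩, ?_⟩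
      rintro ⟨a, l, b⟩ ⟨hmem, hb⟩
      obtain ⟨v', hv', h⟩ := (mem_fullTree_edges S N _).1 hmem
      have hb' : b = v := hb
      rcases h with h | h <;> simp only [Prod.mk.injEq] at h <;>
        obtain ⟨ha, hl, hbb⟩ := h
      · have hvw : v' = w := by omega
        simp [ha, hl, hbb, hvw]
      · exfalso; omega
    · refine ⟨(w, none, 2 * w + 2),
        ⟨(mem_fullTree_edges S N _).2 ⟨w, hwlt, Or.inr rfl⟩, show 2 * w + 2 = v by omega⟩, ?_⟩
      rintro ⟨a, l, b⟩ ⟨hmem, hb⟩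
      obtain ⟨v', hv', h⟩ := (mem_fullTree_edges S N _).1 hmem
      have hb' : b = v := hb
      rcases h with h | h <;> simp only [Prod.mk.injEq] at h <;>
        obtain ⟨ha, hl, hbb⟩ := h
      · exfalso; omega
      · have hvw : v' = w := by omega
        simp [ha, hl, hbb, hvw]
  · -- SolvesSR
    rintro p t ⟨hchain, hterm, htn⟩ _
    have htlt : ¬ t < 2 ^ N - 1 := (fullTree_terminal_iff S N t).1 hterm
    have htn' : t < 2 ^ (N + 1) - 1 := htn
    have hlog : Nat.log 2 (t + 1) = N :=
      Nat.log_eq_of_pow_le_of_lt_pow (by omega) (by rw [pow_succ]; omega)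
    have hts : (fullTree S N).termSet t =
        S.filter fun r => liftK r.K ⊆ Eqs (t + 1) := by
      unfold DGraph.termSet
      have : (fullTree S N).label t = Sum.inr (S.filter fun r => liftK r.K ⊆ Eqs (t + 1)) := by
        simp only [fullTree]; rw [if_neg htlt]
      rw [this]
      rfl
    have hEsub : Eqs (t + 1) ⊆ (fullTree S N).pathEqs p := by
      have := fullTree_chain_eqs S N p 0 t hchain
      rwa [show (0 : ℕ) + 1 = 1 from rfl, eqs_one, Finset.empty_union] at this
    constructor
    · intro r hr
      rw [hts] at hr
      exact (Finset.mem_filter.1 hr).2.trans hEsub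
    · intro hZ r hr hcons'
      have hnot : ¬ liftK r.K ⊆ Eqs (t + 1) := by
        intro hsub
        have : r ∈ (fullTree S N).termSet t := by
          rw [hts]; exact Finset.mem_filter.2 ⟨hr, hsub⟩
        rw [hZ] at this
        simp at this
      obtain ⟨q, hq, hqn⟩ := Finset.not_subset.1 hnot
      obtain ⟨pr, hpr, rfl⟩ := Finset.mem_image.1 hq
      have hiA : pr.1 ∈ attrs S :=
        Finset.mem_biUnion.2 ⟨r, hr, Finset.mem_image.2 ⟨pr, hpr, rfl⟩⟩
      have hiN : pr.1 < N := Finset.mem_range.1 (hattrs ▸ hiA)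
      have hiV : pr.2 ∈ VS S pr.1 :=
        Finset.mem_image.2 ⟨pr, Finset.mem_filter.2 ⟨Finset.mem_biUnion.2 ⟨r, hr, hpr⟩, rfl⟩, rfl⟩
      have hδ : pr.2 = 0 := by
        rw [hVS pr.1 (Finset.mem_range.2 hiN)] at hiV
        exact Finset.mem_singleton.1 hiV
      have hx := mem_eqs (t + 1) pr.1 (by rw [hlog]; exact hiN)
      set x : Option ℕ := if (t + 1) / 2 ^ (Nat.log 2 (t + 1) - 1 - pr.1) % 2 = 1
        then (none : Option ℕ) else some 0 with hxdef
      have hxnone : x = none := by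
        by_cases hb : (t + 1) / 2 ^ (Nat.log 2 (t + 1) - 1 - pr.1) % 2 = 1
        · rw [hxdef, if_pos hb]
        · exfalso
          apply hqn
          have hx0 : x = some 0 := by rw [hxdef, if_neg hb]
          rw [hδ, ← hx0]
          exact hx
      have h1 : (pr.1, some pr.2) ∈ liftK r.K ∪ (fullTree S N).pathEqs p :=
        Finset.mem_union_left _ hq
      have h2 : (pr.1, x) ∈ liftK r.K ∪ (fullTree S N).pathEqs p :=
        Finset.mem_union_right _ (hEsub hx)
      have := hcons' _ h1 _ h2 rfl
      rw [hxnone] at this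
      simp at this

end FullTree
section Sys

/-- The rule `(a_j = 0) ∧ (a_{n+j} = 0) → 0`. -/
def ruleJ (n j : ℕ) : Rule := ⟨{(j, 0), (n + j, 0)}, 0⟩

/-- The rule `(a_{2n} = 0) ∧ ⋯ ∧ (a_{2n+d-1} = 0) → 0`. -/
def ruleL (n d : ℕ) : Rule := ⟨(Finset.range d).image fun i => (2 * n + i, 0), 0⟩

/-- The decision rule system witnessing the lower bound. -/
def sys (n d : ℕ) : Finset Rule := insert (ruleL n d) ((Finset.range n).image (ruleJ n))

lemma attrs_ruleJ (n j : ℕ) : (ruleJ n j).attrs = {j, n + j} := by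
  simp [Rule.attrs, ruleJ, Finset.image_insert]

lemma attrs_ruleL (n d : ℕ) :
    (ruleL n d).attrs = (Finset.range d).image fun i => 2 * n + i := by
  unfold Rule.attrs ruleL
  rw [Finset.image_image]
  rfl

lemma attrs_sys (n d : ℕ) (hn : 0 < n) (hd : 1 ≤ d) :
    attrs (sys n d) = Finset.range (2 * n + d) := by
  ext i
  simp only [attrs, sys, Finset.mem_biUnion, Finset.mem_insert, Finset.mem_image,
    Finset.mem_range]
  constructor
  · rintro ⟨r, hr, hir⟩
    rcases hr with rfl | ⟨j, hj, rfl⟩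
    · rw [attrs_ruleL] at hir
      obtain ⟨k, hk, rfl⟩ := Finset.mem_image.1 hir
      have := Finset.mem_range.1 hk
      omega
    · rw [attrs_ruleJ] at hir
      rcases Finset.mem_insert.1 hir with rfl | h
      · omega
      · rw [Finset.mem_singleton] at h
        omega
  · intro hi
    by_cases h1 : i < n
    · exact ⟨ruleJ n i, Or.inr ⟨i, h1, rfl⟩, by rw [attrs_ruleJ]; simp⟩
    · by_cases h2 : i < 2 * n
      · refine ⟨ruleJ n (i - n), Or.inr ⟨i - n, by omega, rfl⟩, ?_⟩
        rw [attrs_ruleJ]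
        have : n + (i - n) = i := by omega
        rw [this]
        simp
      · refine ⟨ruleL n d, Or.inl rfl, ?_⟩
        rw [attrs_ruleL]
        exact Finset.mem_image.2 ⟨i - 2 * n, Finset.mem_range.2 (by omega), by omega⟩

lemma K_snd_sys (n d : ℕ) : ∀ r ∈ sys n d, ∀ p ∈ r.K, p.2 = 0 := by
  intro r hr p hp
  rcases Finset.mem_insert.1 hr with rfl | hr
  · obtain ⟨k, _, rfl⟩ := Finset.mem_image.1 hp
    rfl
  · obtain ⟨j, _, rfl⟩ := Finset.mem_image.1 hr
    rcases Finset.mem_insert.1 hp with rfl | hp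
    · rfl
    · rw [Finset.mem_singleton] at hp
      subst hp
      rfl

lemma mem_K_sys (n d : ℕ) (hn : 0 < n) (hd : 1 ≤ d) (i : ℕ) (hi : i < 2 * n + d) :
    ∃ r ∈ sys n d, (i, 0) ∈ r.K := by
  by_cases h1 : i < n
  · refine ⟨ruleJ n i, Finset.mem_insert_of_mem (Finset.mem_image.2 ⟨i, Finset.mem_range.2 h1, rfl⟩), ?_⟩
    exact Finset.mem_insert_self _ _
  · by_cases h2 : i < 2 * n
    · refine ⟨ruleJ n (i - n),
        Finset.mem_insert_of_mem (Finset.mem_image.2 ⟨i - n, Finset.mem_range.2 (by omega), rfl⟩), ?_⟩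
      have : n + (i - n) = i := by omega
      refine Finset.mem_insert_of_mem ?_
      rw [this]
      exact Finset.mem_singleton_self _
    · refine ⟨ruleL n d, Finset.mem_insert_self _ _, ?_⟩
      refine Finset.mem_image.2 ⟨i - 2 * n, Finset.mem_range.2 (by omega), ?_⟩
      show (2 * n + (i - 2 * n), (0 : ℕ)) = (i, 0)
      simp only [Prod.mk.injEq]
      exact ⟨by omega, trivial⟩

lemma VS_sys (n d : ℕ) (hn : 0 < n) (hd : 1 ≤ d) :
    ∀ i ∈ Finset.range (2 * n + d), VS (sys n d) i = {0} := by
  intro i hi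
  have hi' := Finset.mem_range.1 hi
  apply Finset.Subset.antisymm
  · intro x hx
    obtain ⟨p, hp, rfl⟩ := Finset.mem_image.1 hx
    have hp' := Finset.mem_filter.1 hp
    obtain ⟨r, hr, hpK⟩ := Finset.mem_biUnion.1 hp'.1
    rw [K_snd_sys n d r hr p hpK]
    simp
  · intro x hx
    rw [Finset.mem_singleton] at hx
    subst hx
    obtain ⟨r, hr, hK⟩ := mem_K_sys n d hn hd i hi'
    exact Finset.mem_image.2 ⟨(i, 0), Finset.mem_filter.2 ⟨Finset.mem_biUnion.2 ⟨r, hr, hK⟩, rfl⟩, rfl⟩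

end Sys
section SysMore

lemma len_ruleJ (n : ℕ) (hn : 0 < n) (j : ℕ) : (ruleJ n j).len = 2 := by
  unfold Rule.len ruleJ
  rw [Finset.card_insert_of_notMem
    (by simp only [Finset.mem_singleton, Prod.mk.injEq]; omega),
    Finset.card_singleton]

lemma len_ruleL (n d : ℕ) : (ruleL n d).len = d := by
  unfold Rule.len ruleL
  rw [Finset.card_image_of_injOn, Finset.card_range]
  intro a _ b _ h
  simp only [Prod.mk.injEq] at h
  omega

lemma dPar_sys (n d : ℕ) (hn : 0 < n) (hd : 2 ≤ d) : dPar (sys n d) = d := by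
  have hX : ((Finset.range n).image (ruleJ n)).sup Rule.len ≤ d := by
    apply Finset.sup_le
    intro r hr
    obtain ⟨j, _, rfl⟩ := Finset.mem_image.1 hr
    rw [len_ruleJ n hn j]
    omega
  unfold dPar sys
  rw [Finset.sup_insert, len_ruleL]
  exact sup_eq_left.2 hX

lemma ruleL_ne_ruleJ (n d : ℕ) (hn : 0 < n) (hd : 1 ≤ d) (j : ℕ) (hj : j < n) :
    ruleL n d ≠ ruleJ n j := by
  intro h
  have hK := congrArg Rule.K h
  have hmem : ((2 * n : ℕ), (0 : ℕ)) ∈ (ruleL n d).K := by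
    unfold ruleL
    refine Finset.mem_image.2 ⟨0, Finset.mem_range.2 (by omega), ?_⟩
    simp
  rw [hK] at hmem
  unfold ruleJ at hmem
  rcases Finset.mem_insert.1 hmem with h' | h' <;>
    · simp only [Finset.mem_singleton, Prod.mk.injEq] at h'
      omega

lemma ruleJ_injOn (n : ℕ) (hn : 0 < n) :
    Set.InjOn (ruleJ n) (Finset.range n : Finset ℕ) := by
  intro a ha b hb h
  simp only [Finset.mem_coe, Finset.mem_range] at ha hb
  have hmem : ((a : ℕ), (0 : ℕ)) ∈ (ruleJ n b).K := by
    rw [← h]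
    exact Finset.mem_insert_self _ _
  have hmem' : ((a : ℕ), (0 : ℕ)) ∈ ({(b, 0), (n + b, 0)} : Finset (ℕ × ℕ)) := hmem
  rcases Finset.mem_insert.1 hmem' with h' | h' <;>
    · simp only [Finset.mem_singleton, Prod.mk.injEq] at h'
      omega

lemma card_sys (n d : ℕ) (hn : 0 < n) (hd : 1 ≤ d) : (sys n d).card = n + 1 := by
  unfold sys
  rw [Finset.card_insert_of_notMem, Finset.card_image_of_injOn (ruleJ_injOn n hn),
    Finset.card_range]
  intro hmem
  obtain ⟨j, hj, hjeq⟩ := Finset.mem_image.1 hmem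
  exact ruleL_ne_ruleJ n d hn hd j (Finset.mem_range.1 hj) hjeq.symm

lemma wf_sys (n d : ℕ) (hn : 0 < n) : ∀ r ∈ sys n d, r.WF := by
  intro r hr p hp q hq hfst
  rcases Finset.mem_insert.1 hr with rfl | hr
  · have hp' : p ∈ (Finset.range d).image (fun i => ((2 * n + i : ℕ), (0 : ℕ))) := hp
    have hq' : q ∈ (Finset.range d).image (fun i => ((2 * n + i : ℕ), (0 : ℕ))) := hq
    obtain ⟨a, _, rfl⟩ := Finset.mem_image.1 hp'
    obtain ⟨b, _, rfl⟩ := Finset.mem_image.1 hq'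
    have hab : 2 * n + a = 2 * n + b := hfst
    have : a = b := by omega
    rw [this]
  · obtain ⟨j, _, rfl⟩ := Finset.mem_image.1 hr
    have hp' : p ∈ ({(j, 0), (n + j, 0)} : Finset (ℕ × ℕ)) := hp
    have hq' : q ∈ ({(j, 0), (n + j, 0)} : Finset (ℕ × ℕ)) := hq
    rcases Finset.mem_insert.1 hp' with rfl | hp2 <;>
      rcases Finset.mem_insert.1 hq' with rfl | hq2
    · rfl
    · rw [Finset.mem_singleton] at hq2
      subst hq2
      exfalso
      have : j = n + j := hfst
      omega
    · rw [Finset.mem_singleton] at hp2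
      subst hp2
      exfalso
      have : n + j = j := hfst
      omega
    · rw [Finset.mem_singleton] at hp2 hq2
      rw [hp2, hq2]

lemma nPar_sys (n d : ℕ) (hn : 0 < n) (hd : 1 ≤ d) : nPar (sys n d) = 2 * n + d := by
  unfold nPar
  rw [attrs_sys n d hn hd, Finset.card_range]

lemma kPar_sys (n d : ℕ) (hn : 0 < n) (hd : 1 ≤ d) : kPar (sys n d) = 1 := by
  unfold kPar
  rw [attrs_sys n d hn hd]
  apply le_antisymm
  · apply Finset.sup_le
    intro i hi
    rw [VS_sys n d hn hd i hi]
    simp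
  · have h0 : (0 : ℕ) ∈ Finset.range (2 * n + d) := Finset.mem_range.2 (by omega)
    calc (1 : ℕ) = (VS (sys n d) 0).card := by rw [VS_sys n d hn hd 0 h0]; simp
    _ ≤ (Finset.range (2 * n + d)).sup fun i => (VS (sys n d) i).card :=
        Finset.le_sup (f := fun i => (VS (sys n d) i).card) h0

lemma liftK_ruleJ (n j : ℕ) :
    liftK (ruleJ n j).K = {(j, some 0), (n + j, some 0)} := by
  unfold liftK ruleJ
  rw [Finset.image_insert, Finset.image_singleton]

/-- The value assignment associated with a subset `B ⊆ {0,…,n-1}`. -/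
def sig (n : ℕ) (B : Finset ℕ) (i : ℕ) : Option ℕ :=
  if i < n then (if i ∈ B then some 0 else none)
  else if i < 2 * n then (if i - n ∈ B then none else some 0)
  else none

lemma sig_dich (n : ℕ) (B : Finset ℕ) (i : ℕ) :
    sig n B i = some 0 ∨ sig n B i = none := by
  unfold sig
  split_ifs <;> simp

lemma rule_killer (n d : ℕ) (hn : 0 < n) (hd : 1 ≤ d) (B : Finset ℕ) :
    ∀ r ∈ sys n d, ∃ i, (i, 0) ∈ r.K ∧ sig n B i = none := by
  intro r hr
  rcases Finset.mem_insert.1 hr with rfl | hr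
  · refine ⟨2 * n, ?_, ?_⟩
    · unfold ruleL
      refine Finset.mem_image.2 ⟨0, Finset.mem_range.2 (by omega), by simp⟩
    · unfold sig
      rw [if_neg (by omega), if_neg (by omega)]
  · obtain ⟨j, hj, rfl⟩ := Finset.mem_image.1 hr
    have hjn : j < n := Finset.mem_range.1 hj
    by_cases hB : j ∈ B
    · refine ⟨n + j, ?_, ?_⟩
      · exact Finset.mem_insert_of_mem (Finset.mem_singleton_self _)
      · unfold sig
        have hs : n + j - n = j := by omega
        rw [if_neg (by omega), if_pos (by omega), hs, if_pos hB]
    · refine ⟨j, Finset.mem_insert_self _ _, ?_⟩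
      unfold sig
      rw [if_pos hjn, if_neg hB]

lemma kill_mem (n d : ℕ) (hn : 0 < n) (hd : 1 ≤ d) (B : Finset ℕ)
    (G : DGraph) (hdg : G.IsDG (sys n d) true) (hsolve : G.SolvesSR (sys n d))
    (p : List (ℕ × Option ℕ)) (t : ℕ) (hcp : G.IsCompletePath p t)
    (hprop : ∀ q ∈ G.pathEqs p, q.1 ∈ attrs (sys n d) ∧ q.2 = sig n B q.1) :
    ∀ j < n, (if j ∈ B then ((n + j : ℕ), (none : Option ℕ)) else (j, none))
      ∈ G.pathEqs p := by
  have hcons : ConsistentE (G.pathEqs p) := by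
    intro q hq q' hq' h1
    rw [(hprop q hq).2, (hprop q' hq').2, h1]
  obtain ⟨h1, h2⟩ := hsolve p t hcp hcons
  obtain ⟨hchain, hterm, htn⟩ := hcp
  have hnode := hdg.2.2.2 t htn
  rw [if_pos hterm] at hnode
  obtain ⟨Z, hZl, hZS⟩ := hnode
  have htset : G.termSet t = Z := by
    unfold DGraph.termSet
    rw [hZl]
    rfl
  have hZempty : G.termSet t = ∅ := by
    rw [htset]
    by_contra hne'
    obtain ⟨r, hrZ⟩ := Finset.nonempty_of_ne_empty hne'
    have hrS : r ∈ sys n d := hZS hrZ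
    obtain ⟨i, hiK, hsig⟩ := rule_killer n d hn hd B r hrS
    have hmem : ((i : ℕ), some (0 : ℕ)) ∈ G.pathEqs p := by
      have := h1 r (htset ▸ hrZ)
      exact this (Finset.mem_image.2 ⟨(i, 0), hiK, rfl⟩)
    have hval := (hprop _ hmem).2
    simp only at hval
    rw [hsig] at hval
    exact nomatch hval
  intro j hj
  have hrj : ruleJ n j ∈ sys n d :=
    Finset.mem_insert_of_mem (Finset.mem_image.2 ⟨j, Finset.mem_range.2 hj, rfl⟩)
  have hnc := h2 hZempty (ruleJ n j) hrj
  unfold ConsistentE at hnc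
  push_neg at hnc
  obtain ⟨q, hq, q', hq', hfst, hsnd⟩ := hnc
  have hlsnd : ∀ x ∈ liftK (ruleJ n j).K, x.2 = some 0 := by
    intro x hx
    rw [liftK_ruleJ n j] at hx
    rcases Finset.mem_insert.1 hx with rfl | hx
    · rfl
    · rw [Finset.mem_singleton] at hx
      subst hx
      rfl
  have hlfst : ∀ x ∈ liftK (ruleJ n j).K, x.1 = j ∨ x.1 = n + j := by
    intro x hx
    rw [liftK_ruleJ n j] at hx
    rcases Finset.mem_insert.1 hx with rfl | hx
    · exact Or.inl rfl
    · rw [Finset.mem_singleton] at hx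
      subst hx
      exact Or.inr rfl
  have hsig1 : sig n B j = none → j ∉ B := by
    intro h hB
    unfold sig at h
    rw [if_pos hj, if_pos hB] at h
    exact nomatch h
  have hsig2 : sig n B (n + j) = none → j ∈ B := by
    intro h
    by_contra hB
    unfold sig at h
    have hs : n + j - n = j := by omega
    rw [if_neg (by omega), if_pos (by omega), hs, if_neg hB] at h
    exact nomatch h
  -- main case analysis
  have main : ∀ q q', q ∈ liftK (ruleJ n j).K → q' ∈ G.pathEqs p → q.1 = q'.1 →
      q.2 ≠ q'.2 → (if j ∈ B then ((n + j : ℕ), (none : Option ℕ)) else (j, none))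
        ∈ G.pathEqs p := by
    intro a b haL hbP hab hne2
    have ha2 : a.2 = some 0 := hlsnd a haL
    have hb2 : b.2 = sig n B b.1 := (hprop b hbP).2
    have hbnone : b.2 = none := by
      rcases sig_dich n B b.1 with h | h
      · exfalso
        apply hne2
        rw [ha2, hb2, h]
      · rw [hb2, h]
    rcases hlfst a haL with h | h
    · -- attribute j
      have hbj : b = ((j : ℕ), (none : Option ℕ)) := by
        rw [Prod.ext_iff]
        exact ⟨by rw [← hab, h], hbnone⟩
      have hsn : sig n B j = none := by
        rw [hbj] at hb2
        exact hb2.symm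
      have hjB : j ∉ B := hsig1 hsn
      rw [if_neg hjB]
      rw [hbj] at hbP
      exact hbP
    · -- attribute n + j
      have hbj : b = ((n + j : ℕ), (none : Option ℕ)) := by
        rw [Prod.ext_iff]
        exact ⟨by rw [← hab, h], hbnone⟩
      have hsn : sig n B (n + j) = none := by
        rw [hbj] at hb2
        exact hb2.symm
      have hjB : j ∈ B := hsig2 hsn
      rw [if_pos hjB]
      rw [hbj] at hbP
      exact hbP
  rcases Finset.mem_union.1 hq with hqL | hqP <;> rcases Finset.mem_union.1 hq' with hqL' | hqP'
  · exact absurd ((hlsnd q hqL).trans (hlsnd q' hqL').symm) hsnd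
  · exact main q q' hqL hqP' hfst hsnd
  · exact main q' q hqL' hqP hfst.symm (fun h => hsnd h.symm)
  · exact absurd (by rw [(hprop q hqP).2, (hprop q' hqP').2, hfst]) hsnd

end SysMore
/-- Lemma 10: for positive n, d with d ≥ 2 there is a reduced system S with
n(S) = 2n + d, k(S) = 1, d(S) = d, |S| = n + 1 and L_ESR(S) ≥ 2^n. -/
theorem statement_3 (n d : ℕ) (hn : 0 < n) (hd : 2 ≤ d) :
    ∃ S : Finset Rule, S.Nonempty ∧ (∀ r ∈ S, r.WF) ∧ Reduced S ∧
      nPar S = 2 * n + d ∧ kPar S = 1 ∧ dPar S = d ∧ S.card = n + 1 ∧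
      2 ^ n ≤ L_ESR S := by
  have hd1 : 1 ≤ d := by omega
  set N := 2 * n + d with hNdef
  have hN1 : 1 ≤ N := by omega
  have hattrs : attrs (sys n d) = Finset.range N := attrs_sys n d hn hd1
  have hVS : ∀ i ∈ Finset.range N, VS (sys n d) i = {0} := VS_sys n d hn hd1
  have hkp : kPar (sys n d) = 1 := kPar_sys n d hn hd1
  refine ⟨sys n d, ⟨ruleL n d, Finset.mem_insert_self _ _⟩, wf_sys n d hn, ?_,
    nPar_sys n d hn hd1, hkp, dPar_sys n d hn hd, card_sys n d hn hd1, ?_⟩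
  · -- Reduced
    refine ⟨?_, ?_, ?_, ?_⟩
    · rw [hattrs, nPar_sys n d hn hd1]
      exact Finset.range_subset_range.2 (by omega)
    · intro x hx
      obtain ⟨r, hr, rfl⟩ := Finset.mem_image.1 hx
      have hx0 : r.rhs = 0 := by
        rcases Finset.mem_insert.1 hr with rfl | hr
        · rfl
        · obtain ⟨j, _, rfl⟩ := Finset.mem_image.1 hr
          rfl
      rw [hx0]
      exact Finset.mem_range.2 (by omega)
    · intro i hi
      rw [hattrs] at hi
      rw [hVS i hi, hkp]
      intro x hx
      rw [Finset.mem_singleton] at hx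
      subst hx
      exact Finset.mem_range.2 (by omega)
    · rw [dPar_sys n d hn hd]
      omega
  · -- 2 ^ n ≤ L_ESR (sys n d)
    have hne : {m | ∃ G : DGraph, TreeSolvesESR (sys n d) G ∧ G.size = m}.Nonempty :=
      ⟨(fullTree (sys n d) N).size,
        fullTree (sys n d) N, fullTree_solves (sys n d) N hN1 hattrs hVS, rfl⟩
    refine le_csInf hne ?_
    rintro m ⟨G, ⟨hdg, htree, hsolve⟩, rfl⟩
    -- value assignments lie in the allowed sets
    have hσ : ∀ (B : Finset ℕ) (a : ℕ), a ∈ attrs (sys n d) →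
        sig n B a ∈ allowed (sys n d) true a := by
      intro B a ha
      have hall : allowed (sys n d) true a = {some 0, none} := by
        unfold allowed
        rw [hVS a (hattrs ▸ ha)]
        ext l
        simp
      rw [hall]
      rcases sig_dich n B a with h | h <;> rw [h] <;> simp
    -- for every B there is a complete path following sig n B
    have hpath : ∀ B : Finset ℕ, ∃ p t, G.IsCompletePath p t ∧
        ∀ q ∈ G.pathEqs p, q.1 ∈ attrs (sys n d) ∧ q.2 = sig n B q.1 := by
      intro B
      obtain ⟨p, t, h1, h2, h3, h4⟩ :=
        exists_path G (sys n d) hdg (sig n B) (hσ B) _ G.root le_rfl hdg.1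
      exact ⟨p, t, ⟨h1, h2, h3⟩, h4⟩
    choose pB tB hcomp hprop using hpath
    -- injectivity of B ↦ tB B on subsets of range n
    have hinj : Set.InjOn tB ((Finset.range n).powerset : Finset (Finset ℕ)) := by
      intro B hB B' hB' hteq
      simp only [Finset.mem_coe, Finset.mem_powerset] at hB hB'
      by_contra hne'
      have hpeq : pB B = pB B' := by
        refine path_unique G hdg.2.1 htree (pB B).length _ _ (tB B) le_rfl
          (hcomp B).1 ?_
        rw [hteq]
        exact (hcomp B').1
      have hcases : (∃ j ∈ B, j ∉ B') ∨ (∃ j ∈ B', j ∉ B) := by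
        by_contra hno
        push_neg at hno
        exact hne' (Finset.Subset.antisymm hno.1 hno.2)
      rcases hcases with ⟨j, hjB, hjB'⟩ | ⟨j, hjB', hjB⟩
      · have hj : j < n := Finset.mem_range.1 (hB hjB)
        have hmem := kill_mem n d hn hd1 B G hdg hsolve (pB B) (tB B)
          (hcomp B) (hprop B) j hj
        rw [if_pos hjB, hpeq] at hmem
        have h5 : (none : Option ℕ) = sig n B' (n + j) := (hprop B' _ hmem).2
        unfold sig at h5
        have hs : n + j - n = j := by omega
        rw [if_neg (by omega), if_pos (by omega), hs, if_neg hjB'] at h5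
        exact nomatch h5
      · have hj : j < n := Finset.mem_range.1 (hB' hjB')
        have hmem := kill_mem n d hn hd1 B' G hdg hsolve (pB B') (tB B')
          (hcomp B') (hprop B') j hj
        rw [if_pos hjB', ← hpeq] at hmem
        have h5 : (none : Option ℕ) = sig n B (n + j) := (hprop B _ hmem).2
        unfold sig at h5
        have hs : n + j - n = j := by omega
        rw [if_neg (by omega), if_pos (by omega), hs, if_neg hjB] at h5
        exact nomatch h5
    have hmaps : ∀ B ∈ (Finset.range n).powerset, tB B ∈ Finset.range G.n :=
      fun B _ => Finset.mem_range.2 (hcomp B).2.2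
    calc 2 ^ n = ((Finset.range n).powerset).card := by
          rw [Finset.card_powerset, Finset.card_range]
    _ ≤ (Finset.range G.n).card := Finset.card_le_card_of_injOn tB hmaps hinj
    _ = G.size := Finset.card_range _

end DRS

end
end

section
/- Let n, d be positive integers. Then there exists a reduced decision rule system S such that n(S) = n + d, k(S) = 1, d(S) = d, |S| = n + 1, and T_EAD(S) ≥ 2^{n+1}. -/
/- Common formal framework for decision rule systems and decision trees /
   acyclic decision graphs, following Durdymyradov & Moshkov. -/

attribute [local instance] Classical.propDecidable

noncomputable section

namespace DRS

/-! ### Auxiliary construction for statement_4 -/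

section Aux

open Finset

/-- Rule `a_i = 0 → i+1`. -/
def ruleA (i : ℕ) : Rule := ⟨{(i, 0)}, i + 1⟩

/-- Rule `(a_n = 0) ∧ ⋯ ∧ (a_{n+d-1} = 0) → 0`. -/
def ruleB (n d : ℕ) : Rule := ⟨(Finset.Ico n (n + d)).image (fun j => (j, 0)), 0⟩

/-- The system of lemma 11(a). -/
def mySys (n d : ℕ) : Finset Rule := (Finset.range n).image ruleA ∪ {ruleB n d}

variable {n d : ℕ}

lemma ruleA_injective : Function.Injective ruleA := by
  intro i j h
  have := congrArg Rule.rhs h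
  simpa [ruleA] using this

lemma mem_mySys {r : Rule} :
    r ∈ mySys n d ↔ (∃ i < n, r = ruleA i) ∨ r = ruleB n d := by
  simp [mySys, eq_comm]; exact or_comm

lemma mySys_struct (hr : ∀ r ∈ mySys n d, True) : True := trivial

lemma K_mySys {r : Rule} (hr : r ∈ mySys n d) :
    ∀ p ∈ r.K, p.2 = 0 ∧ p.1 < n + d := by
  rcases mem_mySys.1 hr with ⟨i, hi, rfl⟩ | rfl
  · intro p hp
    simp only [ruleA, Finset.mem_singleton] at hp
    subst hp; exact ⟨rfl, by omega⟩
  · intro p hp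
    simp only [ruleB, Finset.mem_image, Finset.mem_Ico] at hp
    obtain ⟨j, hj, rfl⟩ := hp
    exact ⟨rfl, by omega⟩

lemma rhs_inj_mySys {r r' : Rule} (hr : r ∈ mySys n d) (hr' : r' ∈ mySys n d)
    (h : r.rhs = r'.rhs) : r = r' := by
  rcases mem_mySys.1 hr with ⟨i, hi, rfl⟩ | rfl <;>
    rcases mem_mySys.1 hr' with ⟨j, hj, rfl⟩ | rfl <;>
      simp [ruleA, ruleB] at h ⊢ <;> omega

lemma mySys_wf : ∀ r ∈ mySys n d, r.WF := by
  intro r hr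
  rcases mem_mySys.1 hr with ⟨i, hi, rfl⟩ | rfl
  · intro p hp q hq _
    simp only [ruleA, Finset.mem_singleton] at hp hq
    rw [hp, hq]
  · intro p hp q hq h1
    simp only [ruleB, Finset.mem_image] at hp hq
    obtain ⟨j, _, rfl⟩ := hp
    obtain ⟨j', _, rfl⟩ := hq
    simp_all

lemma attrs_ruleA (i : ℕ) : (ruleA i).attrs = {i} := by
  simp [ruleA, Rule.attrs]

lemma attrs_ruleB : (ruleB n d).attrs = Finset.Ico n (n + d) := by
  simp [ruleB, Rule.attrs, Finset.image_image]
  exact Finset.image_id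

lemma attrs_mySys (hn : 0 < n) (hd : 0 < d) : attrs (mySys n d) = Finset.range (n + d) := by
  ext a
  simp only [attrs, Finset.mem_biUnion, Finset.mem_range]
  constructor
  · rintro ⟨r, hr, ha⟩
    rcases mem_mySys.1 hr with ⟨i, hi, rfl⟩ | rfl
    · rw [attrs_ruleA] at ha; simp at ha; omega
    · rw [attrs_ruleB] at ha; simp at ha; omega
  · intro ha
    by_cases h : a < n
    · exact ⟨ruleA a, mem_mySys.2 (Or.inl ⟨a, h, rfl⟩), by simp [attrs_ruleA]⟩
    · exact ⟨ruleB n d, mem_mySys.2 (Or.inr rfl), by simp [attrs_ruleB]; omega⟩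

lemma VS_mySys (hn : 0 < n) {a : ℕ} (ha : a < n + d) : VS (mySys n d) a = {0} := by
  ext x
  simp only [VS, Finset.mem_image, Finset.mem_filter, Finset.mem_biUnion, Finset.mem_singleton]
  constructor
  · rintro ⟨p, ⟨⟨r, hr, hp⟩, -⟩, rfl⟩
    exact (K_mySys hr p hp).1
  · rintro rfl
    by_cases h : a < n
    · exact ⟨(a, 0), ⟨⟨ruleA a, mem_mySys.2 (Or.inl ⟨a, h, rfl⟩), by simp [ruleA]⟩, rfl⟩, rfl⟩
    · refine ⟨(a, 0), ⟨⟨ruleB n d, mem_mySys.2 (Or.inr rfl), ?_⟩, rfl⟩, rfl⟩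
      simp [ruleB]
      omega

lemma nPar_mySys (hn : 0 < n) (hd : 0 < d) : nPar (mySys n d) = n + d := by
  rw [nPar, attrs_mySys hn hd, Finset.card_range]

lemma kPar_mySys (hn : 0 < n) (hd : 0 < d) : kPar (mySys n d) = 1 := by
  rw [kPar, attrs_mySys hn hd]
  have : ∀ a ∈ Finset.range (n + d), (VS (mySys n d) a).card = 1 := by
    intro a ha
    rw [VS_mySys hn (Finset.mem_range.1 ha)]
    simp
  rw [Finset.sup_congr rfl this]
  exact Finset.sup_const ⟨0, Finset.mem_range.2 (by omega)⟩ 1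

lemma len_ruleB : (ruleB n d).len = d := by
  rw [ruleB, Rule.len]
  rw [Finset.card_image_of_injective _ (by intro a b h; simpa using h)]
  simp

lemma dPar_mySys (hn : 0 < n) (hd : 0 < d) : dPar (mySys n d) = d := by
  rw [dPar, mySys, Finset.sup_union, Finset.sup_image]
  have h1 : (Finset.range n).sup (Rule.len ∘ ruleA) = 1 := by
    have : ∀ a ∈ Finset.range n, (Rule.len ∘ ruleA) a = 1 := by
      intro a _; simp [ruleA, Rule.len]
    rw [Finset.sup_congr rfl this]
    exact Finset.sup_const ⟨0, Finset.mem_range.2 hn⟩ 1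
  have h2 : ({ruleB n d} : Finset Rule).sup Rule.len = d := by
    simp [len_ruleB]
  rw [h1, h2]
  omega

lemma card_mySys (hn : 0 < n) : (mySys n d).card = n + 1 := by
  rw [mySys, Finset.card_union_of_disjoint, Finset.card_image_of_injective _ ruleA_injective]
  · simp
  · simp only [Finset.disjoint_singleton_right, Finset.mem_image]
    rintro ⟨i, _, h⟩
    have := congrArg Rule.rhs h
    simp [ruleA, ruleB] at this

lemma rhsSet_mySys (hn : 0 < n) : rhsSet (mySys n d) = Finset.range (n + 1) := by
  ext x
  simp only [rhsSet, Finset.mem_image, Finset.mem_range]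
  constructor
  · rintro ⟨r, hr, rfl⟩
    rcases mem_mySys.1 hr with ⟨i, hi, rfl⟩ | rfl <;> simp [ruleA, ruleB] <;> omega
  · intro hx
    rcases Nat.eq_zero_or_pos x with rfl | hpos
    · exact ⟨ruleB n d, mem_mySys.2 (Or.inr rfl), rfl⟩
    · exact ⟨ruleA (x - 1), mem_mySys.2 (Or.inl ⟨x - 1, by omega, rfl⟩), by simp [ruleA]; omega⟩

lemma reduced_mySys (hn : 0 < n) (hd : 0 < d) : Reduced (mySys n d) := by
  refine ⟨?_, ?_, ?_, ?_⟩
  · rw [attrs_mySys hn hd, nPar_mySys hn hd]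
    exact Finset.range_subset_range.2 (by omega)
  · rw [rhsSet_mySys hn]
    exact Finset.range_subset_range.2 (by simp)
  · intro i hi
    rw [attrs_mySys hn hd] at hi
    rw [VS_mySys hn (Finset.mem_range.1 hi), kPar_mySys hn hd]
    intro x hx
    simp at hx
    simp [hx]
  · rw [dPar_mySys hn hd]; omega

lemma allowed_mySys (hn : 0 < n) {a : ℕ} (ha : a < n + d) :
    allowed (mySys n d) true a = {some 0, none} := by
  rw [allowed, VS_mySys hn ha]
  ext x
  simp [or_comm]

end Aux

section BigTree

open Finset

variable {n d : ℕ}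

/-- Terminal label of node `v` in the full tree. -/
def bigZ (n d : ℕ) (v : ℕ) : Finset Rule :=
  (mySys n d).filter fun r => ∀ p ∈ r.K, (v + 1).testBit (n + d - 1 - p.1) = false

/-- The full binary e-tree over `mySys n d`. -/
def bigT (n d : ℕ) : DGraph where
  n := 2 ^ (n + d + 1) - 1
  root := 0
  label := fun v => if v + 1 < 2 ^ (n + d) then Sum.inl (Nat.size (v + 1) - 1)
    else Sum.inr (bigZ n d v)
  edges := (Finset.range (2 ^ (n + d) - 1)).biUnion fun v =>
    {(v, some 0, 2 * v + 1), (v, (none : Option ℕ), 2 * v + 2)}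

lemma mem_bigT_edges {v w : ℕ} {l : Option ℕ} :
    (v, l, w) ∈ (bigT n d).edges ↔
      v + 1 < 2 ^ (n + d) ∧ ((l = some 0 ∧ w = 2 * v + 1) ∨ (l = none ∧ w = 2 * v + 2)) := by
  have h1 : (1 : ℕ) ≤ 2 ^ (n + d) := Nat.one_le_two_pow
  simp only [bigT, Finset.mem_biUnion, Finset.mem_range, Finset.mem_insert,
    Finset.mem_singleton, Prod.mk.injEq]
  constructor
  · rintro ⟨u, hu, ⟨rfl, rfl, rfl⟩ | ⟨rfl, rfl, rfl⟩⟩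
    · exact ⟨by omega, Or.inl ⟨rfl, rfl⟩⟩
    · exact ⟨by omega, Or.inr ⟨rfl, rfl⟩⟩
  · rintro ⟨hv, ⟨rfl, rfl⟩ | ⟨rfl, rfl⟩⟩
    · exact ⟨v, by omega, Or.inl ⟨rfl, rfl, rfl⟩⟩
    · exact ⟨v, by omega, Or.inr ⟨rfl, rfl, rfl⟩⟩

lemma bigT_isTerminal {v : ℕ} :
    (bigT n d).IsTerminal v ↔ ¬(v + 1 < 2 ^ (n + d)) := by
  constructor
  · intro h hv
    exact h (v, some 0, 2 * v + 1) (mem_bigT_edges.2 ⟨hv, Or.inl ⟨rfl, rfl⟩⟩) rfl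
  · rintro h ⟨a, l, b⟩ he rfl
    exact h (mem_bigT_edges.1 he).1

lemma pow_range_unique {a b y : ℕ} (ha1 : 2 ^ a ≤ y) (ha2 : y < 2 ^ (a + 1))
    (hb1 : 2 ^ b ≤ y) (hb2 : y < 2 ^ (b + 1)) : a = b := by
  by_contra h
  rcases Nat.lt_or_ge a b with hab | hab
  · have : 2 ^ (a + 1) ≤ 2 ^ b := Nat.pow_le_pow_right (by norm_num) (by omega)
    omega
  · have : 2 ^ (b + 1) ≤ 2 ^ a := Nat.pow_le_pow_right (by norm_num) (by omega)
    omega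

lemma size_of_range {m y : ℕ} (h1 : 2 ^ m ≤ y) (h2 : y < 2 ^ (m + 1)) :
    Nat.size y = m + 1 := by
  have hle : Nat.size y ≤ m + 1 := Nat.size_le.2 h2
  have hlt : m < Nat.size y := Nat.lt_size.2 h1
  omega

lemma shift_mem_range {N x m : ℕ} (h1 : 2 ^ N ≤ x) (h2 : x < 2 ^ (N + 1)) (hm : m ≤ N) :
    2 ^ m ≤ x >>> (N - m) ∧ x >>> (N - m) < 2 ^ (m + 1) := by
  have hp : (0 : ℕ) < 2 ^ (N - m) := Nat.pow_pos (by norm_num)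
  rw [Nat.shiftRight_eq_div_pow]
  constructor
  · rw [Nat.le_div_iff_mul_le hp, ← Nat.pow_add]
    have : m + (N - m) = N := by omega
    rw [this]; exact h1
  · rw [Nat.div_lt_iff_lt_mul hp, ← Nat.pow_add]
    have : m + 1 + (N - m) = N + 1 := by omega
    rw [this]; exact h2

lemma bigT_chain : ∀ (p : List (ℕ × Option ℕ)) (v t : ℕ),
    (bigT n d).chainFrom v p t →
    (t + 1) >>> p.length = v + 1 ∧
    (∀ e ∈ p, ∃ m < p.length, (t + 1) >>> (p.length - m) = e.1 + 1 ∧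
      e.1 + 1 < 2 ^ (n + d) ∧
      e.2 = (if (t + 1).testBit (p.length - 1 - m) then none else some 0)) ∧
    (∀ m < p.length, ∃ e ∈ p, (t + 1) >>> (p.length - m) = e.1 + 1) := by
  intro p
  induction p with
  | nil =>
    intro v t h
    have : v = t := h
    subst this
    exact ⟨by simp, by simp, by simp⟩
  | cons e₀ rest ih =>
    intro v t h
    obtain ⟨he₀, w, hw, hchain⟩ := h
    obtain ⟨IH1, IH2, IH3⟩ := ih w t hchain
    obtain ⟨hv, hcase⟩ := mem_bigT_edges.1 hw
    obtain ⟨b, hb, hw1, hlab⟩ : ∃ b, b < 2 ∧ w + 1 = 2 * (v + 1) + b ∧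
        e₀.2 = (if b = 1 then none else some 0) := by
      rcases hcase with ⟨h1, h2⟩ | ⟨h1, h2⟩
      · exact ⟨0, by omega, by omega, by simp [h1]⟩
      · exact ⟨1, by omega, by omega, by simp [h1]⟩
    have hshift : (t + 1) >>> (rest.length + 1) = v + 1 := by
      rw [Nat.shiftRight_succ, IH1]; omega
    have hbit : (t + 1).testBit rest.length = decide (b = 1) := by
      have h2 : (t + 1) >>> rest.length % 2 = b := by rw [IH1]; omega
      rw [Nat.testBit_eq_decide_div_mod_eq, ← Nat.shiftRight_eq_div_pow, h2]
    simp only [List.length_cons]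
    refine ⟨hshift, ?_, ?_⟩
    · intro e he
      rcases List.mem_cons.1 he with rfl | he
      · refine ⟨0, by omega, ?_, ?_, ?_⟩
        · simp only [Nat.sub_zero]
          rw [he₀]; exact hshift
        · rw [he₀]; exact hv
        · simp only [Nat.add_sub_cancel, Nat.sub_zero]
          rw [hbit, hlab]
          rcases (by omega : b = 0 ∨ b = 1) with rfl | rfl <;> simp
      · obtain ⟨m, hm, h1, h2, h3⟩ := IH2 e he
        refine ⟨m + 1, by omega, ?_, h2, ?_⟩
        · have heq : rest.length + 1 - (m + 1) = rest.length - m := by omega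
          simp only [heq]; exact h1
        · have heq : rest.length + 1 - 1 - (m + 1) = rest.length - 1 - m := by omega
          simp only [heq]; exact h3
    · intro m hm
      rcases Nat.eq_zero_or_pos m with rfl | hpos
      · refine ⟨e₀, List.mem_cons_self, ?_⟩
        simp only [Nat.sub_zero]
        rw [he₀]; exact hshift
      · obtain ⟨e, he, h1⟩ := IH3 (m - 1) (by omega)
        refine ⟨e, List.mem_cons_of_mem _ he, ?_⟩
        have heq : rest.length + 1 - m = rest.length - (m - 1) := by omega
        simp only [heq]; exact h1

lemma bigT_path_spec {p : List (ℕ × Option ℕ)} {t : ℕ}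
    (h : (bigT n d).IsCompletePath p t) :
    p.length = n + d ∧ 2 ^ (n + d) ≤ t + 1 ∧ t + 1 < 2 ^ (n + d + 1) ∧
    (∀ j x, (j, x) ∈ (bigT n d).pathEqs p ↔
      (j < n + d ∧ x = (if (t + 1).testBit (n + d - 1 - j) then none else some 0))) := by
  obtain ⟨hchain, hterm, htlt⟩ := h
  obtain ⟨C1, C2, C3⟩ := bigT_chain p 0 t hchain
  have hpow : (1:ℕ) ≤ 2 ^ (n + d) := Nat.one_le_two_pow
  have ht1 : 2 ^ (n + d) ≤ t + 1 := by
    have := bigT_isTerminal.1 hterm; omega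
  have ht2 : t + 1 < 2 ^ (n + d + 1) := by
    have h3 : t < 2 ^ (n + d + 1) - 1 := htlt
    have h2 : (1:ℕ) ≤ 2 ^ (n + d + 1) := Nat.one_le_two_pow
    omega
  -- p.length = N
  have hlen : p.length = n + d := by
    set L := p.length with hLdef
    have hdiv : (t + 1) / 2 ^ L = 1 := by
      rw [← Nat.shiftRight_eq_div_pow, C1]
    have hge : 2 ^ L ≤ t + 1 := by
      have h1 : 1 ≤ (t + 1) / 2 ^ L := by omega
      have h2 := (Nat.le_div_iff_mul_le (k := 2 ^ L)
        (Nat.pow_pos (by norm_num))).1 h1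
      simpa using h2
    have hlt : t + 1 < 2 ^ (L + 1) := by
      have h2 : (t + 1) / 2 ^ L < 2 := by omega
      rw [Nat.div_lt_iff_lt_mul (Nat.pow_pos (by norm_num))] at h2
      rw [Nat.pow_succ]
      omega
    exact pow_range_unique hge hlt ht1 ht2
  rw [hlen] at C1 C2 C3
  refine ⟨hlen, ht1, ht2, ?_⟩
  intro j x
  constructor
  · intro hjx
    simp only [DGraph.pathEqs, List.mem_toFinset, List.mem_filterMap] at hjx
    obtain ⟨e, he, heq⟩ := hjx
    obtain ⟨m, hm, h1, h2, h3⟩ := C2 e he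
    have hlabel : (bigT n d).label e.1 = Sum.inl (Nat.size (e.1 + 1) - 1) := by
      simp only [bigT]
      rw [if_pos h2]
    rw [hlabel] at heq
    simp only [Sum.elim_inl, Option.some.injEq, Prod.mk.injEq] at heq
    obtain ⟨hj, hx⟩ := heq
    have hrange := shift_mem_range ht1 ht2 (le_of_lt hm)
    rw [h1] at hrange
    have hsize : Nat.size (e.1 + 1) = m + 1 := size_of_range hrange.1 hrange.2
    have hjm : j = m := by omega
    subst hjm
    exact ⟨hm, by rw [← hx, h3]⟩
  · rintro ⟨hj, rfl⟩
    obtain ⟨e, he, h1⟩ := C3 j hj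
    obtain ⟨m, hm, h1', h2, h3⟩ := C2 e he
    have hrange := shift_mem_range ht1 ht2 (le_of_lt hj)
    rw [h1] at hrange
    have hrange' := shift_mem_range ht1 ht2 (le_of_lt hm)
    rw [h1'] at hrange'
    have hjm : m = j :=
      pow_range_unique hrange'.1 hrange'.2 hrange.1 hrange.2
    subst hjm
    simp only [DGraph.pathEqs, List.mem_toFinset, List.mem_filterMap]
    refine ⟨e, he, ?_⟩
    have hlabel : (bigT n d).label e.1 = Sum.inl (Nat.size (e.1 + 1) - 1) := by
      simp only [bigT]
      rw [if_pos h2]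
    rw [hlabel]
    have hsize : Nat.size (e.1 + 1) = m + 1 := size_of_range hrange'.1 hrange'.2
    simp [hsize, h3]

end BigTree

section BigTreeSolves

open Finset

variable {n d : ℕ}

lemma bigT_termSet {t : ℕ} (ht : ¬(t + 1 < 2 ^ (n + d))) :
    (bigT n d).termSet t = bigZ n d t := by
  simp only [DGraph.termSet, bigT, if_neg ht, Sum.elim_inr, id]

lemma bigT_solvesAD (hn : 0 < n) : (bigT n d).SolvesAD (mySys n d) := by
  intro p t hpath _
  obtain ⟨hlen, ht1, ht2, hmem⟩ := bigT_path_spec hpath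
  have hterm : ¬(t + 1 < 2 ^ (n + d)) := bigT_isTerminal.1 hpath.2.1
  rw [bigT_termSet hterm]
  constructor
  · intro r hr
    obtain ⟨hrS, hrZ⟩ := Finset.mem_filter.1 hr
    intro q hq
    simp only [liftK, Finset.mem_image] at hq
    obtain ⟨pr, hpr, rfl⟩ := hq
    obtain ⟨hval, hattr⟩ := K_mySys hrS pr hpr
    exact (hmem pr.1 (some pr.2)).2
      ⟨hattr, by rw [hval, if_neg (by simp [hrZ pr hpr])]⟩
  · intro r hrS hrZ _
    have : ∃ q ∈ r.K, ¬((t + 1).testBit (n + d - 1 - q.1) = false) := by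
      by_contra hcon
      push_neg at hcon
      exact hrZ (Finset.mem_filter.2 ⟨hrS, hcon⟩)
    obtain ⟨q, hq, hbit⟩ := this
    obtain ⟨hval, hattr⟩ := K_mySys hrS q hq
    intro hcons
    have h1 : (q.1, some q.2) ∈ liftK r.K ∪ (bigT n d).pathEqs p :=
      Finset.mem_union_left _ (Finset.mem_image.2 ⟨q, hq, rfl⟩)
    have h2 : (q.1, (none : Option ℕ)) ∈ liftK r.K ∪ (bigT n d).pathEqs p := by
      refine Finset.mem_union_right _ ((hmem q.1 none).2 ⟨hattr, ?_⟩)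
      rw [if_pos (by simpa using hbit)]
    have := hcons _ h1 _ h2 rfl
    simp at this

lemma bigT_isDG (hn : 0 < n) (hd : 0 < d) : (bigT n d).IsDG (mySys n d) true := by
  have hpow : (2:ℕ) ≤ 2 ^ (n + d) := by
    calc (2:ℕ) = 2 ^ 1 := by norm_num
    _ ≤ 2 ^ (n + d) := Nat.pow_le_pow_right (by norm_num) (by omega)
  have hpow1 : 2 ^ (n + d + 1) = 2 * 2 ^ (n + d) := by rw [Nat.pow_succ]; ring
  refine ⟨?_, ?_, ?_, ?_⟩
  · show 0 < 2 ^ (n + d + 1) - 1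
    omega
  · rintro ⟨v, l, w⟩ he
    obtain ⟨hv, hc⟩ := mem_bigT_edges.1 he
    show v < 2 ^ (n + d + 1) - 1 ∧ w < 2 ^ (n + d + 1) - 1
    rcases hc with ⟨-, rfl⟩ | ⟨-, rfl⟩ <;> omega
  · -- acyclic
    have hstep : ∀ a b, (bigT n d).step a b → a < b := by
      rintro a b ⟨l, hl⟩
      obtain ⟨-, hc⟩ := mem_bigT_edges.1 hl
      rcases hc with ⟨-, rfl⟩ | ⟨-, rfl⟩ <;> omega
    intro v hv
    have : ∀ a b, Relation.TransGen (bigT n d).step a b → a < b := by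
      intro a b h
      induction h with
      | single h => exact hstep _ _ h
      | tail _ h ih => exact ih.trans (hstep _ _ h)
    exact absurd (this v v hv) (by omega)
  · intro v hv
    have hvn : v < 2 ^ (n + d + 1) - 1 := hv
    by_cases hw : v + 1 < 2 ^ (n + d)
    · rw [if_neg (by rw [bigT_isTerminal]; exact not_not_intro hw)]
      refine ⟨Nat.size (v + 1) - 1, ?_, ?_, ?_, ?_⟩
      · simp only [bigT]; rw [if_pos hw]
      · rw [attrs_mySys hn hd, Finset.mem_range]
        have h1 : Nat.size (v + 1) ≤ n + d := Nat.size_le.2 hw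
        have h2 : 0 < Nat.size (v + 1) := Nat.size_pos.2 (by omega)
        omega
      · intro l
        have ha : Nat.size (v + 1) - 1 < n + d := by
          have h1 : Nat.size (v + 1) ≤ n + d := Nat.size_le.2 hw
          have h2 : 0 < Nat.size (v + 1) := Nat.size_pos.2 (by omega)
          omega
        rw [allowed_mySys hn ha]
        constructor
        · rintro ⟨w', hw'⟩
          obtain ⟨-, hc⟩ := mem_bigT_edges.1 hw'
          rcases hc with ⟨rfl, -⟩ | ⟨rfl, -⟩ <;> simp
        · intro hl
          simp only [Finset.mem_insert, Finset.mem_singleton] at hl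
          rcases hl with rfl | rfl
          · exact ⟨2 * v + 1, mem_bigT_edges.2 ⟨hw, Or.inl ⟨rfl, rfl⟩⟩⟩
          · exact ⟨2 * v + 2, mem_bigT_edges.2 ⟨hw, Or.inr ⟨rfl, rfl⟩⟩⟩
      · intro l w w' h1 h2
        obtain ⟨-, hc1⟩ := mem_bigT_edges.1 h1
        obtain ⟨-, hc2⟩ := mem_bigT_edges.1 h2
        rcases hc1 with ⟨rfl, rfl⟩ | ⟨rfl, rfl⟩ <;>
          rcases hc2 with ⟨hl2, rfl⟩ | ⟨hl2, rfl⟩ <;> simp_all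
    · rw [if_pos (bigT_isTerminal.2 hw)]
      exact ⟨bigZ n d v, by simp only [bigT]; rw [if_neg hw], Finset.filter_subset _ _⟩

lemma bigT_isTree : (bigT n d).IsTree := by
  constructor
  · rintro ⟨u, l, w⟩ he
    obtain ⟨-, hc⟩ := mem_bigT_edges.1 he
    show w ≠ (bigT n d).root
    rcases hc with ⟨-, rfl⟩ | ⟨-, rfl⟩ <;> simp [bigT]
  · intro v hv hv0
    have hvn : v < 2 ^ (n + d + 1) - 1 := hv
    have hv0' : v ≠ 0 := hv0
    have hpow1 : 2 ^ (n + d + 1) = 2 * 2 ^ (n + d) := by rw [Nat.pow_succ]; ring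
    rcases Nat.even_or_odd v with ⟨k, hk⟩ | ⟨k, hk⟩
    · -- v = 2k, parent k-1 with label none, v = 2(k-1)+2
      have hk1 : 1 ≤ k := by omega
      refine ⟨(k - 1, (none : Option ℕ), v), ⟨?_, rfl⟩, ?_⟩
      · exact mem_bigT_edges.2 ⟨by omega, Or.inr ⟨rfl, by omega⟩⟩
      · rintro ⟨u, l, w⟩ ⟨he, hw⟩
        obtain ⟨hu, hc⟩ := mem_bigT_edges.1 he
        simp only at hw
        subst hw
        rcases hc with ⟨rfl, hww⟩ | ⟨rfl, hww⟩
        · omega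
        · have : u = k - 1 := by omega
          subst this; rfl
    · -- v = 2k+1, parent k with label some 0
      refine ⟨(k, (some 0 : Option ℕ), v), ⟨?_, rfl⟩, ?_⟩
      · exact mem_bigT_edges.2 ⟨by omega, Or.inl ⟨rfl, by omega⟩⟩
      · rintro ⟨u, l, w⟩ ⟨he, hw⟩
        obtain ⟨hu, hc⟩ := mem_bigT_edges.1 he
        simp only at hw
        subst hw
        rcases hc with ⟨rfl, hww⟩ | ⟨rfl, hww⟩
        · have : u = k := by omega
          subst this; rfl
        · omega

lemma bigT_treeSolvesEAD (hn : 0 < n) (hd : 0 < d) :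
    TreeSolvesEAD (mySys n d) (bigT n d) :=
  ⟨bigT_isDG hn hd, bigT_isTree, bigT_solvesAD hn⟩

end BigTreeSolves

section LowerBound

open Finset

variable {n d : ℕ}

/-- From any node of a decision graph, a terminal node can be reached following
a given value assignment `f`. -/
lemma reach_terminal (G : DGraph) (S : Finset Rule) (hDG : G.IsDG S true)
    (f : ℕ → Option ℕ) (hf : ∀ a ∈ attrs S, f a ∈ allowed S true a) :
    ∀ v < G.n, ∃ p t, G.chainFrom v p t ∧ G.IsTerminal t ∧ t < G.n ∧
      ∀ e ∈ p, ∃ a, G.label e.1 = Sum.inl a ∧ e.2 = f a := by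
  obtain ⟨hroot, hedge, hacyc, hnode⟩ := hDG
  set R : ℕ → Finset ℕ :=
    fun v => (Finset.range G.n).filter (fun w => Relation.ReflTransGen G.step v w) with hR
  suffices h : ∀ k, ∀ v < G.n, (R v).card ≤ k →
      ∃ p t, G.chainFrom v p t ∧ G.IsTerminal t ∧ t < G.n ∧
        ∀ e ∈ p, ∃ a, G.label e.1 = Sum.inl a ∧ e.2 = f a by
    intro v hv
    exact h (R v).card v hv le_rfl
  intro k
  induction k with
  | zero =>
    intro v hv hcard
    exfalso
    have hvR : v ∈ R v := by
      rw [hR]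
      exact Finset.mem_filter.2 ⟨Finset.mem_range.2 hv, Relation.ReflTransGen.refl⟩
    have := Finset.card_pos.2 ⟨v, hvR⟩
    omega
  | succ k ih =>
    intro v hv hcard
    by_cases ht : G.IsTerminal v
    · exact ⟨[], v, rfl, ht, hv, by simp⟩
    · have hn' := hnode v hv
      rw [if_neg ht] at hn'
      obtain ⟨a, hlab, haS, hiff, -⟩ := hn'
      obtain ⟨w, hw⟩ := (hiff (f a)).2 (hf a haS)
      have hwn : w < G.n := (hedge _ hw).2
      have hstep : G.step v w := ⟨f a, hw⟩
      have hsub : R w ⊆ R v := by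
        intro x hx
        rw [hR] at hx ⊢
        obtain ⟨hx1, hx2⟩ := Finset.mem_filter.1 hx
        exact Finset.mem_filter.2 ⟨hx1, (Relation.ReflTransGen.single hstep).trans hx2⟩
      have hvnotin : v ∉ R w := by
        intro hmem
        rw [hR] at hmem
        have hrtg : Relation.ReflTransGen G.step w v := (Finset.mem_filter.1 hmem).2
        exact hacyc v (Relation.TransGen.head' hstep hrtg)
      have hvin : v ∈ R v := by
        rw [hR]
        exact Finset.mem_filter.2 ⟨Finset.mem_range.2 hv, Relation.ReflTransGen.refl⟩
      have hlt : (R w).card < (R v).card :=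
        Finset.card_lt_card (Finset.ssubset_iff_of_subset hsub |>.2 ⟨v, hvin, hvnotin⟩)
      obtain ⟨p, t, hchain, hterm, htn, hlabels⟩ := ih w hwn (by omega)
      refine ⟨(v, f a) :: p, t, ⟨rfl, w, hw, hchain⟩, hterm, htn, ?_⟩
      intro e he
      rcases List.mem_cons.1 he with rfl | he
      · exact ⟨a, hlab, rfl⟩
      · exact hlabels e he

/-- For any assignment with values in `{some 0, none}`, any decision tree solving
`EAD (mySys n d)` has a terminal node whose rule set is characterized by `f`. -/
lemma termSet_char (hn : 0 < n) (hd : 0 < d) (G : DGraph)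
    (hDG : G.IsDG (mySys n d) true) (hAD : G.SolvesAD (mySys n d))
    (f : ℕ → Option ℕ) (hf0 : ∀ a, f a = some 0 ∨ f a = none) :
    ∃ t, G.IsTerminal t ∧ t < G.n ∧ ∀ r ∈ mySys n d,
      (r ∈ G.termSet t ↔ ∀ q ∈ r.K, f q.1 = some 0) := by
  have hf : ∀ a ∈ attrs (mySys n d), f a ∈ allowed (mySys n d) true a := by
    intro a ha
    rw [attrs_mySys hn hd, Finset.mem_range] at ha
    rw [allowed_mySys hn ha]
    rcases hf0 a with h | h <;> simp [h]
  obtain ⟨p, t, hchain, hterm, htn, hlabels⟩ :=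
    reach_terminal G (mySys n d) hDG f hf G.root hDG.1
  have hpe : ∀ q ∈ G.pathEqs p, q.2 = f q.1 := by
    rintro ⟨j, x⟩ hq
    simp only [DGraph.pathEqs, List.mem_toFinset, List.mem_filterMap] at hq
    obtain ⟨e, he, heq⟩ := hq
    obtain ⟨a, hlab, hfa⟩ := hlabels e he
    rw [hlab] at heq
    simp only [Sum.elim_inl, Option.some.injEq, Prod.mk.injEq] at heq
    obtain ⟨rfl, rfl⟩ := heq
    exact hfa
  have hcons : ConsistentE (G.pathEqs p) := by
    intro q hq q' hq' h1
    rw [hpe q hq, hpe q' hq', h1]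
  obtain ⟨HA, HB⟩ := hAD p t ⟨hchain, hterm, htn⟩ hcons
  have hτsub : G.termSet t ⊆ mySys n d := by
    have hn' := hDG.2.2.2 t htn
    rw [if_pos hterm] at hn'
    obtain ⟨Z, hZ1, hZ2⟩ := hn'
    rw [DGraph.termSet, hZ1]
    exact hZ2
  refine ⟨t, hterm, htn, ?_⟩
  intro r hrS
  constructor
  · intro hrt q hq
    have : (q.1, some q.2) ∈ G.pathEqs p :=
      HA r hrt (Finset.mem_image.2 ⟨q, hq, rfl⟩)
    have h2 := hpe _ this
    rw [← h2, (K_mySys hrS q hq).1]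
  · intro hall
    by_contra hrt
    have hnotrhs : r.rhs ∉ (G.termSet t).image Rule.rhs := by
      intro hmm
      obtain ⟨r', hr', hrr⟩ := Finset.mem_image.1 hmm
      exact hrt (rhs_inj_mySys hrS (hτsub hr') hrr.symm ▸ hr')
    refine HB r hrS hrt hnotrhs ?_
    intro q hq q' hq' h1
    have key : ∀ x ∈ liftK r.K ∪ G.pathEqs p, x.2 = f x.1 := by
      intro x hx
      rcases Finset.mem_union.1 hx with hx | hx
      · obtain ⟨pr, hpr, rfl⟩ := Finset.mem_image.1 hx
        have := (K_mySys hrS pr hpr).1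
        rw [this]
        exact (hall pr hpr).symm
      · exact hpe x hx
    rw [key q hq, key q' hq', h1]

/-- The assignment associated to a subset `A ⊆ {0,…,n}`. -/
def famF (n : ℕ) (A : Finset ℕ) : ℕ → Option ℕ := fun j =>
  if (j < n ∧ j ∈ A) ∨ (n ≤ j ∧ n ∈ A) then none else some 0

lemma tCount_lb (hn : 0 < n) (hd : 0 < d) (G : DGraph)
    (hG : TreeSolvesEAD (mySys n d) G) : 2 ^ (n + 1) ≤ G.tCount := by
  obtain ⟨hDG, -, hAD⟩ := hG
  have hterm : ∀ A : Finset ℕ, ∃ t, G.IsTerminal t ∧ t < G.n ∧ ∀ r ∈ mySys n d,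
      (r ∈ G.termSet t ↔ ∀ q ∈ r.K, famF n A q.1 = some 0) := by
    intro A
    refine termSet_char hn hd G hDG hAD (famF n A) ?_
    intro a
    unfold famF
    split <;> simp
  choose tA h1 h2 h3 using hterm
  have hcharA : ∀ (A : Finset ℕ) (i : ℕ), i < n →
      (ruleA i ∈ G.termSet (tA A) ↔ i ∉ A) := by
    intro A i hi
    rw [h3 A (ruleA i) (mem_mySys.2 (Or.inl ⟨i, hi, rfl⟩))]
    simp only [ruleA, Finset.mem_singleton]
    constructor
    · intro h hiA
      have := h (i, 0) rfl
      rw [famF, if_pos (Or.inl ⟨hi, hiA⟩)] at this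
      simp at this
    · intro hiA q hq
      subst hq
      rw [famF, if_neg (by push_neg; exact ⟨fun _ => hiA, fun h => by omega⟩)]
  have hcharB : ∀ A : Finset ℕ,
      (ruleB n d ∈ G.termSet (tA A) ↔ n ∉ A) := by
    intro A
    rw [h3 A (ruleB n d) (mem_mySys.2 (Or.inr rfl))]
    constructor
    · intro h hnA
      have hmem : ((n : ℕ), (0 : ℕ)) ∈ (ruleB n d).K := by
        simp only [ruleB, Finset.mem_image, Finset.mem_Ico]
        exact ⟨n, ⟨le_rfl, by omega⟩, rfl⟩
      have := h (n, 0) hmem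
      rw [famF, if_pos (Or.inr ⟨le_rfl, hnA⟩)] at this
      simp at this
    · intro hnA q hq
      simp only [ruleB, Finset.mem_image, Finset.mem_Ico] at hq
      obtain ⟨j, hj, rfl⟩ := hq
      rw [famF, if_neg (by push_neg; exact ⟨fun h => by omega, fun _ => hnA⟩)]
  have hinj : Set.InjOn (fun A => G.termSet (tA A))
      ((Finset.range (n + 1)).powerset : Finset (Finset ℕ)) := by
    intro A hA B hB hAB
    simp only [Finset.coe_powerset, Set.mem_preimage, Set.mem_powerset_iff,
      Finset.coe_subset, Finset.mem_coe, Finset.mem_powerset] at hA hB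
    simp only at hAB
    ext i
    by_cases hi : i < n
    · have e1 := hcharA A i hi
      have e2 := hcharA B i hi
      rw [hAB] at e1
      have := e1.symm.trans e2
      tauto
    · by_cases hi2 : i = n
      · subst hi2
        have e1 := hcharB A
        have e2 := hcharB B
        rw [hAB] at e1
        have := e1.symm.trans e2
        tauto
      · constructor
        · intro h
          have := hA h
          simp only [Finset.mem_range] at this
          omega
        · intro h
          have := hB h
          simp only [Finset.mem_range] at this
          omega
  have hsub : ((Finset.range (n + 1)).powerset).image (fun A => G.termSet (tA A)) ⊆
      ((Finset.range G.n).filter fun v => G.IsTerminal v).image fun v => G.termSet v := by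
    intro x hx
    obtain ⟨A, hA, rfl⟩ := Finset.mem_image.1 hx
    exact Finset.mem_image.2 ⟨tA A,
      Finset.mem_filter.2 ⟨Finset.mem_range.2 (h2 A), h1 A⟩, rfl⟩
  calc 2 ^ (n + 1) = ((Finset.range (n + 1)).powerset).card := by
        rw [Finset.card_powerset, Finset.card_range]
    _ = (((Finset.range (n + 1)).powerset).image (fun A => G.termSet (tA A))).card :=
        (Finset.card_image_of_injOn hinj).symm
    _ ≤ G.tCount := Finset.card_le_card hsub

end LowerBound

/-- Lemma 11(a): for positive n, d there is a reduced system S with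
n(S) = n + d, k(S) = 1, d(S) = d, |S| = n + 1 and T_EAD(S) ≥ 2^{n+1}. -/
theorem statement_4 (n d : ℕ) (hn : 0 < n) (hd : 0 < d) :
    ∃ S : Finset Rule, S.Nonempty ∧ (∀ r ∈ S, r.WF) ∧ Reduced S ∧
      nPar S = n + d ∧ kPar S = 1 ∧ dPar S = d ∧ S.card = n + 1 ∧
      2 ^ (n + 1) ≤ T_EAD S := by
  refine ⟨mySys n d, ⟨ruleB n d, mem_mySys.2 (Or.inr rfl)⟩, mySys_wf,
    reduced_mySys hn hd, nPar_mySys hn hd, kPar_mySys hn hd, dPar_mySys hn hd,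
    card_mySys hn, ?_⟩
  rw [T_EAD]
  refine le_csInf ⟨(bigT n d).tCount, bigT n d, bigT_treeSolvesEAD hn hd, rfl⟩ ?_
  rintro m ⟨G, hG, rfl⟩
  exact tCount_lb hn hd G hG

end DRS

end
end
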